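/- arXiv:2409.17324 — 9 statements merged into one kernel-verified Lean document; each statement's English description precedes it below -/
import Mathlib

section
/- Let A ∈ B(X), B ∈ B(U, X), C ∈ B(X, U), D ∈ B(U) with I + D invertible, and set A^× = A − B(I+D)⁻¹C and G(z) = I + D + zC(I − zA)⁻¹B. Fix z ∈ ℂ with I − zA invertible (or z = 0). Then G(z) is invertible if and only if I − zA^× is invertible (which holds automatically at z = 0), and in that case G(z)⁻¹ = (I+D)⁻¹ − z(I+D)⁻¹C(I − zA^×)⁻¹B(I+D)⁻¹. -/
noncomputable section
open Complex ContinuousLinearMap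

private lemma cancel_left' {𝕜 V W : Type*} [NontriviallyNormedField 𝕜]
    [NormedAddCommGroup V] [NormedSpace 𝕜 V] [NormedAddCommGroup W] [NormedSpace 𝕜 W]
    (f g : W →L[𝕜] W) (h : f ∘L g = 1) (x : V →L[𝕜] W) : f ∘L (g ∘L x) = x := by
  rw [← ContinuousLinearMap.comp_assoc, h, ContinuousLinearMap.one_def,
    ContinuousLinearMap.id_comp]

private lemma ring_inverse_eq' {M₀ : Type*} [MonoidWithZero M₀] (a b : M₀)
    (h1 : a * b = 1) (h2 : b * a = 1) : Ring.inverse a = b := by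
  have hu : IsUnit a := ⟨⟨a, b, h1, h2⟩, rfl⟩
  rw [← mul_one (Ring.inverse a), ← h1, ← mul_assoc, Ring.inverse_mul_cancel _ hu, one_mul]

set_option maxHeartbeats 1000000 in
/-- with `A^× = A − B(I+D)⁻¹C` and `G(z) = I + D + zC(I − zA)⁻¹B`, for any `z`
with `I − zA` invertible (or `z = 0`), `G(z)` is invertible iff `I − zA^×` is invertible, and
then `G(z)⁻¹ = (I+D)⁻¹ − z(I+D)⁻¹C(I − zA^×)⁻¹B(I+D)⁻¹`. -/
theorem transfer_function_inverse
    {X U : Type*} [NormedAddCommGroup X] [InnerProductSpace ℂ X] [CompleteSpace X]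
    [NormedAddCommGroup U] [InnerProductSpace ℂ U] [CompleteSpace U]
    (A : X →L[ℂ] X) (B : U →L[ℂ] X) (C : X →L[ℂ] U) (D : U →L[ℂ] U)
    (hD : IsUnit (1 + D))
    (Atimes : X →L[ℂ] X) (hAtimes : Atimes = A - B ∘L Ring.inverse (1 + D) ∘L C)
    (G : ℂ → (U →L[ℂ] U))
    (hG : ∀ w : ℂ, G w = 1 + D + w • (C ∘L Ring.inverse (1 - w • A) ∘L B))
    (z : ℂ) (hz : z = 0 ∨ IsUnit (1 - z • A)) :
    (IsUnit (G z) ↔ IsUnit (1 - z • Atimes)) ∧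
    (z = 0 → IsUnit (1 - z • Atimes)) ∧
    (IsUnit (1 - z • Atimes) →
      Ring.inverse (G z) =
        Ring.inverse (1 + D) -
          z • (Ring.inverse (1 + D) ∘L C ∘L Ring.inverse (1 - z • Atimes) ∘L B ∘L
            Ring.inverse (1 + D))) := by
  set E : U →L[ℂ] U := 1 + D with hE
  set e : U →L[ℂ] U := Ring.inverse E with he
  have hΔ : IsUnit (1 - z • A) := by
    rcases hz with h | h
    · simp [h]
    · exact h
  set Δ : X →L[ℂ] X := 1 - z • A with hΔdef
  set d : X →L[ℂ] X := Ring.inverse Δ with hd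
  set Δx : X →L[ℂ] X := 1 - z • Atimes with hΔx
  have hEe : E ∘L e = 1 := by rw [← ContinuousLinearMap.mul_def]; exact Ring.mul_inverse_cancel _ hD
  have heE : e ∘L E = 1 := by rw [← ContinuousLinearMap.mul_def]; exact Ring.inverse_mul_cancel _ hD
  have hΔd : Δ ∘L d = 1 := by rw [← ContinuousLinearMap.mul_def]; exact Ring.mul_inverse_cancel _ hΔ
  have hdΔ : d ∘L Δ = 1 := by rw [← ContinuousLinearMap.mul_def]; exact Ring.inverse_mul_cancel _ hΔ
  have hkey : Δx = Δ + z • (B ∘L (e ∘L C)) := by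
    rw [hΔx, hΔdef, hAtimes]
    simp only [smul_sub, ContinuousLinearMap.comp_assoc]
    abel
  have hGz : G z = E + z • (C ∘L (d ∘L B)) := by rw [hG z]
  have L1 : G z ∘L (e ∘L C) = C ∘L (d ∘L Δx) := by
    rw [hGz, hkey]
    simp only [ContinuousLinearMap.add_comp, ContinuousLinearMap.comp_add,
      ContinuousLinearMap.smul_comp, ContinuousLinearMap.comp_smul,
      ContinuousLinearMap.comp_assoc, cancel_left' E e hEe, cancel_left' d Δ hdΔ, hdΔ,
      ContinuousLinearMap.one_def, ContinuousLinearMap.comp_id]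
  have L2 : Δx ∘L (d ∘L B) = B ∘L (e ∘L G z) := by
    rw [hGz, hkey]
    simp only [ContinuousLinearMap.add_comp, ContinuousLinearMap.comp_add,
      ContinuousLinearMap.smul_comp, ContinuousLinearMap.comp_smul,
      ContinuousLinearMap.comp_assoc, cancel_left' Δ d hΔd, cancel_left' e E heE, hΔd, heE,
      ContinuousLinearMap.one_def, ContinuousLinearMap.id_comp, ContinuousLinearMap.comp_id]
  have dir1 : IsUnit Δx → (G z) * (e - z • (e ∘L (C ∘L (Ring.inverse Δx ∘L (B ∘L e))))) = 1 ∧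
      (e - z • (e ∘L (C ∘L (Ring.inverse Δx ∘L (B ∘L e))))) * (G z) = 1 := by
    intro hx
    set dx : X →L[ℂ] X := Ring.inverse Δx with hdx
    have hΔxdx : Δx ∘L dx = 1 := by
      rw [← ContinuousLinearMap.mul_def]; exact Ring.mul_inverse_cancel _ hx
    have hdxΔx : dx ∘L Δx = 1 := by
      rw [← ContinuousLinearMap.mul_def]; exact Ring.inverse_mul_cancel _ hx
    constructor
    · rw [ContinuousLinearMap.mul_def]
      have expand : G z ∘L (e - z • (e ∘L (C ∘L (dx ∘L (B ∘L e))))) =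
          G z ∘L e - z • ((G z ∘L (e ∘L C)) ∘L (dx ∘L (B ∘L e))) := by
        simp only [ContinuousLinearMap.comp_sub, ContinuousLinearMap.comp_smul,
          ContinuousLinearMap.comp_assoc]
      rw [expand, L1]
      nth_rewrite 1 [hGz]
      simp only [ContinuousLinearMap.add_comp, ContinuousLinearMap.smul_comp,
        ContinuousLinearMap.comp_assoc, cancel_left' Δx dx hΔxdx, hEe]
      abel
    · rw [ContinuousLinearMap.mul_def]
      have expand : (e - z • (e ∘L (C ∘L (dx ∘L (B ∘L e))))) ∘L G z =
          e ∘L G z - z • (e ∘L (C ∘L (dx ∘L (B ∘L (e ∘L G z))))) := by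
        simp only [ContinuousLinearMap.sub_comp, ContinuousLinearMap.smul_comp,
          ContinuousLinearMap.comp_assoc]
      rw [expand, ← L2]
      nth_rewrite 1 [hGz]
      simp only [ContinuousLinearMap.comp_add, ContinuousLinearMap.comp_smul,
        ContinuousLinearMap.comp_assoc, cancel_left' dx Δx hdxΔx, cancel_left' e E heE, heE,
        ContinuousLinearMap.one_def, ContinuousLinearMap.id_comp]
      abel
  have dir2 : IsUnit (G z) → Δx * (d - z • (d ∘L (B ∘L (Ring.inverse (G z) ∘L (C ∘L d))))) = 1 ∧
      (d - z • (d ∘L (B ∘L (Ring.inverse (G z) ∘L (C ∘L d))))) * Δx = 1 := by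
    intro hg
    set g : U →L[ℂ] U := Ring.inverse (G z) with hgdef
    have hGg : G z ∘L g = 1 := by
      rw [← ContinuousLinearMap.mul_def]; exact Ring.mul_inverse_cancel _ hg
    have hgG : g ∘L G z = 1 := by
      rw [← ContinuousLinearMap.mul_def]; exact Ring.inverse_mul_cancel _ hg
    constructor
    · rw [ContinuousLinearMap.mul_def]
      have expand : Δx ∘L (d - z • (d ∘L (B ∘L (g ∘L (C ∘L d))))) =
          Δx ∘L d - z • ((Δx ∘L (d ∘L B)) ∘L (g ∘L (C ∘L d))) := by
        simp only [ContinuousLinearMap.comp_sub, ContinuousLinearMap.comp_smul,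
          ContinuousLinearMap.comp_assoc]
      rw [expand, L2]
      nth_rewrite 1 [hkey]
      simp only [ContinuousLinearMap.add_comp, ContinuousLinearMap.smul_comp,
        ContinuousLinearMap.comp_assoc, cancel_left' (G z) g hGg, hΔd]
      abel
    · rw [ContinuousLinearMap.mul_def]
      have expand : (d - z • (d ∘L (B ∘L (g ∘L (C ∘L d))))) ∘L Δx =
          d ∘L Δx - z • (d ∘L (B ∘L (g ∘L (C ∘L (d ∘L Δx)))))  := by
        simp only [ContinuousLinearMap.sub_comp, ContinuousLinearMap.smul_comp,
          ContinuousLinearMap.comp_assoc]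
      rw [expand, ← L1]
      nth_rewrite 1 [hkey]
      simp only [ContinuousLinearMap.comp_add, ContinuousLinearMap.comp_smul,
        ContinuousLinearMap.comp_assoc, cancel_left' g (G z) hgG, hdΔ,
        ContinuousLinearMap.one_def, ContinuousLinearMap.id_comp]
      abel
  refine ⟨⟨fun hg => ?_, fun hx => ?_⟩, fun h0 => ?_, fun hx => ?_⟩
  · obtain ⟨h1, h2⟩ := dir2 hg
    exact ⟨⟨Δx, _, h1, h2⟩, rfl⟩
  · obtain ⟨h1, h2⟩ := dir1 hx
    exact ⟨⟨G z, _, h1, h2⟩, rfl⟩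
  · rw [hΔx, h0]
    simp
  · obtain ⟨h1, h2⟩ := dir1 hx
    rw [ring_inverse_eq' (G z) _ h1 h2]
end
end

section
/- Let A ∈ B(X), B ∈ B(U, X), C ∈ B(X, U), D ∈ B(U) with I + D invertible, set A^× = A − B(I+D)⁻¹C, and let G(z) = I + D + zC(I − zA)⁻¹B. Suppose X = L ∔ L^× is a direct sum of closed subspaces with A L ⊆ L and A^× L^× ⊆ L^×, and let Π be the (bounded) projection onto L^× along L. Let I + D = D₁D₂ with D₁, D₂ invertible in B(U). Define W₁(z) = D₁ + zC(I − zA)⁻¹(I − Π)B D₂⁻¹ and W₂(z) = D₂ + z D₁⁻¹ C Π (I − zA)⁻¹ B. Then for every z = 0 or z with I − zA invertible, G(z) = W₁(z) W₂(z). -/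
noncomputable section
open Complex ContinuousLinearMap

/-- factorization `G(z) = W₁(z)W₂(z)` induced by a direct sum `X = L ∔ L^×`
with `AL ⊆ L`, `A^×L^× ⊆ L^×`, projection `Π` onto `L^×` along `L`, and `I + D = D₁D₂`. -/
theorem transfer_function_factorization
    {X U : Type*} [NormedAddCommGroup X] [InnerProductSpace ℂ X] [CompleteSpace X]
    [NormedAddCommGroup U] [InnerProductSpace ℂ U] [CompleteSpace U]
    (A : X →L[ℂ] X) (B : U →L[ℂ] X) (C : X →L[ℂ] U) (D : U →L[ℂ] U)
    (hD : IsUnit (1 + D))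
    (Atimes : X →L[ℂ] X) (hAtimes : Atimes = A - B ∘L Ring.inverse (1 + D) ∘L C)
    (L Ltimes : Submodule ℂ X)
    (hLClosed : IsClosed (L : Set X)) (hLtimesClosed : IsClosed (Ltimes : Set X))
    (hcompl : IsCompl L Ltimes)
    (hAL : ∀ x ∈ L, A x ∈ L) (hAtimesLtimes : ∀ x ∈ Ltimes, Atimes x ∈ Ltimes)
    (Pi : X →L[ℂ] X) (hPi : IsIdempotentElem Pi)
    (hPiRange : LinearMap.range (Pi : X →ₗ[ℂ] X) = Ltimes) (hPiKer : LinearMap.ker (Pi : X →ₗ[ℂ] X) = L)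
    (D₁ D₂ : U →L[ℂ] U) (hD₁ : IsUnit D₁) (hD₂ : IsUnit D₂) (hD₁D₂ : 1 + D = D₁ ∘L D₂)
    (G : ℂ → (U →L[ℂ] U))
    (hG : ∀ w : ℂ, G w = 1 + D + w • (C ∘L Ring.inverse (1 - w • A) ∘L B))
    (W₁ W₂ : ℂ → (U →L[ℂ] U))
    (hW₁ : ∀ w : ℂ, W₁ w =
      D₁ + w • (C ∘L Ring.inverse (1 - w • A) ∘L (1 - Pi) ∘L B ∘L Ring.inverse D₂))
    (hW₂ : ∀ w : ℂ, W₂ w =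
      D₂ + w • (Ring.inverse D₁ ∘L C ∘L Pi ∘L Ring.inverse (1 - w • A) ∘L B)) :
    ∀ z : ℂ, (z = 0 ∨ IsUnit (1 - z • A)) → G z = W₁ z ∘L W₂ z := by
  intro z hz
  have hunit : IsUnit (1 - z • A) := by
    rcases hz with rfl | h
    · simpa using isUnit_one
    · exact h
  obtain ⟨Q, hQdef⟩ : ∃ Q : X →L[ℂ] X, Q = 1 - Pi := ⟨_, rfl⟩
  obtain ⟨R, hRdef⟩ : ∃ R : X →L[ℂ] X, R = Ring.inverse (1 - z • A) := ⟨_, rfl⟩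
  obtain ⟨E, hEdef⟩ : ∃ E : U →L[ℂ] U, E = Ring.inverse (1 + D) := ⟨_, rfl⟩
  have hRl : R * (1 - z • A) = 1 := by rw [hRdef]; exact Ring.inverse_mul_cancel _ hunit
  have hRr : (1 - z • A) * R = 1 := by rw [hRdef]; exact Ring.mul_inverse_cancel _ hunit
  have hEr : (1 + D) * E = 1 := by rw [hEdef]; exact Ring.mul_inverse_cancel _ hD
  have hPiPi : ∀ x, Pi (Pi x) = Pi x := fun x => by
    have := DFunLike.congr_fun hPi x
    simpa [mul_apply] using this
  -- Pi ∘ A ∘ Q = 0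
  have hPAQ : Pi * (A * Q) = 0 := by
    ext x
    have hxL : Q x ∈ L := by
      rw [← hPiKer, LinearMap.mem_ker]
      simp [hQdef, hPiPi x]
    have hAx : A (Q x) ∈ L := hAL _ hxL
    rw [← hPiKer, LinearMap.mem_ker] at hAx
    simpa [mul_apply] using hAx
  -- Q ∘ Atimes ∘ Pi = 0
  have hQAtP : Q * (Atimes * Pi) = 0 := by
    ext x
    have hx : Pi x ∈ Ltimes := by rw [← hPiRange]; exact ⟨x, rfl⟩
    have hAx : Atimes (Pi x) ∈ Ltimes := hAtimesLtimes _ hx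
    rw [← hPiRange] at hAx
    obtain ⟨w, hw⟩ := hAx
    simp [mul_apply, hQdef, ← hw, hPiPi w]
  -- A * Q = Q * A * Q
  have hAQ : A * Q = Q * (A * Q) := by
    have h1 : (Pi + Q) * (A * Q) = Pi * (A * Q) + Q * (A * Q) := add_mul _ _ _
    have h2 : Pi + Q = 1 := by rw [hQdef]; abel
    rw [h2, one_mul, hPAQ, zero_add] at h1
    exact h1
  -- Q * A * Pi = Q * ((B ∘L E ∘L C) * Pi)
  have hQAP : Q * (A * Pi) = Q * (B.comp (E.comp C) * Pi) := by
    have h := hQAtP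
    rw [hAtimes, ← hEdef, sub_mul, mul_sub, sub_eq_zero] at h
    exact h
  -- commutator identity
  have hcomm : Q * R - R * Q = z • (R * ((Q * (A * Pi)) * R)) := by
    have e1 : Q * R = R * (((1 - z • A) * Q) * R) := by
      rw [← mul_assoc, ← mul_assoc, hRl, one_mul]
    have e2 : R * Q = R * ((Q * (1 - z • A)) * R) := by
      rw [mul_assoc Q, hRr, mul_one]
    rw [e1, e2, ← mul_sub, ← sub_mul]
    have inner : (1 - z • A) * Q - Q * (1 - z • A) = z • (Q * A - A * Q) := by
      simp only [sub_mul, mul_sub, one_mul, mul_one, smul_mul_assoc, mul_smul_comm, smul_sub]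
      abel
    rw [inner]
    have hQAmAQ : Q * A - A * Q = Q * (A * Pi) := by
      have h1 : Q * A - A * Q = Q * A - Q * (A * Q) := by rw [← hAQ]
      rw [h1, ← mul_sub]
      congr 1
      have h3 : A - A * Q = A * (1 - Q) := by rw [mul_sub, mul_one]
      rw [h3, hQdef, sub_sub_cancel]
    rw [hQAmAQ, smul_mul_assoc, mul_smul_comm]
  -- key resolvent identity
  have key : R = Pi * R + R * Q + z • (R * ((Q * (B.comp (E.comp C) * Pi)) * R)) := by
    have hsplit : R = Pi * R + Q * R := by
      rw [hQdef, sub_mul, one_mul]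
      abel
    rw [← hQAP, ← hcomm]
    conv_lhs => rw [hsplit]
    abel
  -- inverse facts in comp form
  have hDinv1 : D₁ ∘L (Ring.inverse D₁ : U →L[ℂ] U) = 1 := Ring.mul_inverse_cancel _ hD₁
  have hDinv2 : (Ring.inverse D₂ : U →L[ℂ] U) ∘L D₂ = 1 := Ring.inverse_mul_cancel _ hD₂
  have hE21 : (Ring.inverse D₂ : U →L[ℂ] U) ∘L Ring.inverse D₁ = E := by
    have h1 : (Ring.inverse D₂ * Ring.inverse D₁) * (1 + D) = 1 := by
      have hmul : (1 : U →L[ℂ] U) + D = D₁ * D₂ := hD₁D₂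
      rw [hmul, mul_assoc, ← mul_assoc (Ring.inverse D₁), Ring.inverse_mul_cancel _ hD₁,
        one_mul, Ring.inverse_mul_cancel _ hD₂]
    calc (Ring.inverse D₂ * Ring.inverse D₁ : U →L[ℂ] U)
        = (Ring.inverse D₂ * Ring.inverse D₁) * ((1 + D) * E) := by rw [hEr, mul_one]
      _ = ((Ring.inverse D₂ * Ring.inverse D₁) * (1 + D)) * E := (mul_assoc _ _ _).symm
      _ = E := by rw [h1, one_mul]
  have c1 : ∀ f : U →L[ℂ] U, D₁ ∘L ((Ring.inverse D₁ : U →L[ℂ] U) ∘L f) = f := by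
    intro f; rw [← comp_assoc, hDinv1, one_def, id_comp]
  have c3 : ∀ g : U →L[ℂ] U,
      (Ring.inverse D₂ : U →L[ℂ] U) ∘L ((Ring.inverse D₁ : U →L[ℂ] U) ∘L g) = E ∘L g := by
    intro g; rw [← comp_assoc, hE21]
  -- main identity compressed with C and B
  have main : C ∘L (R ∘L B) = C ∘L (Pi ∘L (R ∘L B)) + C ∘L (R ∘L (Q ∘L B))
      + z • (C ∘L (R ∘L (Q ∘L (B ∘L (E ∘L (C ∘L (Pi ∘L (R ∘L B)))))))) := by
    conv_lhs => rw [key]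
    simp only [mul_def, add_comp, comp_add, smul_comp, comp_smul, comp_assoc]
  -- assemble
  rw [hG z, hW₁ z, hW₂ z, ← hRdef, ← hQdef]
  simp only [add_comp, comp_add, smul_comp, comp_smul, comp_assoc, smul_smul]
  rw [hDinv2]
  simp only [one_def, comp_id, id_comp, c1, c3, ← hD₁D₂]
  rw [main]
  simp only [smul_add, smul_smul]
  abel
end
end

section
/- Let X, U be complex Hilbert spaces, A ∈ B(X), B ∈ B(U,X), C ∈ B(X,U), D ∈ B(U) with I + D invertible, and let H ∈ B(X) be selfadjoint and invertible. Suppose the strict KYP inequality holds: [A B; C D]* diag(H, I) [A B; C D] ≺ diag(H, I), i.e. there is ε > 0 with ⟨H(Ax+Bu), Ax+Bu⟩ + ‖Cx+Du‖² ≤ ⟨Hx, x⟩ + ‖u‖² − ε(‖x‖² + ‖u‖²) for all x ∈ X, u ∈ U. Then A^× := A − B(I+D)⁻¹C satisfies (A^×)* H A^× ≺ H, i.e. there exists δ > 0 with ⟨H A^× x, A^× x⟩ ≤ ⟨Hx, x⟩ − δ‖x‖² for all x ∈ X. -/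
noncomputable section
open Complex ContinuousLinearMap

/-- the strict KYP inequality for the system matrix `[A B; C D]` with Gram
operator `diag(H, I)` implies that `A^× = A − B(I+D)⁻¹C` is a uniform `H`-contraction:
`(A^×)* H A^× ≺ H`. -/
theorem strict_KYP_implies_Atimes_contraction
    {X U : Type*} [NormedAddCommGroup X] [InnerProductSpace ℂ X] [CompleteSpace X]
    [NormedAddCommGroup U] [InnerProductSpace ℂ U] [CompleteSpace U]
    (A : X →L[ℂ] X) (B : U →L[ℂ] X) (C : X →L[ℂ] U) (D : U →L[ℂ] U)
    (hD : IsUnit (1 + D))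
    (H : X →L[ℂ] X) (hH : IsSelfAdjoint H) (hHinv : IsUnit H)
    (hKYP : ∃ ε : ℝ, 0 < ε ∧ ∀ (x : X) (u : U),
      (inner ℂ (H (A x + B u)) (A x + B u) : ℂ).re + ‖C x + D u‖ ^ 2 ≤
        (inner ℂ (H x) x : ℂ).re + ‖u‖ ^ 2 - ε * (‖x‖ ^ 2 + ‖u‖ ^ 2))
    (Atimes : X →L[ℂ] X) (hAtimes : Atimes = A - B ∘L Ring.inverse (1 + D) ∘L C) :
    ∃ δ : ℝ, 0 < δ ∧ ∀ x : X,
      (inner ℂ (H (Atimes x)) (Atimes x) : ℂ).re ≤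
        (inner ℂ (H x) x : ℂ).re - δ * ‖x‖ ^ 2 := by
  obtain ⟨ε, hε, hK⟩ := hKYP
  refine ⟨ε, hε, fun x => ?_⟩
  set E : U →L[ℂ] U := Ring.inverse (1 + D) with hE
  set u : U := -(E (C x)) with hu
  have hcancel : ((1 + D) * E) (C x) = C x := by
    rw [Ring.mul_inverse_cancel _ hD]; rfl
  have h2 : C x + D u = -u := by
    have : E (C x) + D (E (C x)) = C x := by
      simpa [ContinuousLinearMap.mul_apply] using hcancel
    rw [hu, neg_neg, map_neg, ← sub_eq_add_neg, sub_eq_iff_eq_add]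
    exact this.symm
  have h1 : A x + B u = Atimes x := by
    simp [hAtimes, hu, sub_eq_add_neg]
  have := hK x u
  rw [h1, h2] at this
  have hn : ‖-u‖ ^ 2 = ‖u‖ ^ 2 := by rw [norm_neg]
  nlinarith [sq_nonneg ‖u‖, hε, this]
end
end

section
/- Let X, U be complex Hilbert spaces, A ∈ B(X), B ∈ B(U,X), C ∈ B(X,U), D ∈ B(U) with I + D invertible, and H ∈ B(X) selfadjoint and invertible. If the adjoint strict KYP inequality [A B; C D] diag(H⁻¹, I) [A B; C D]* ≺ diag(H⁻¹, I) holds, then A^× := A − B(I+D)⁻¹C satisfies A^× H⁻¹ (A^×)* ≺ H⁻¹. -/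
set_option maxHeartbeats 800000
noncomputable section
open Complex ContinuousLinearMap

/-- the adjoint strict KYP inequality
`[A B; C D] diag(H⁻¹, I) [A B; C D]* ≺ diag(H⁻¹, I)` implies that `A^× = A − B(I+D)⁻¹C`
satisfies `A^× H⁻¹ (A^×)* ≺ H⁻¹`. -/
theorem adjoint_strict_KYP_implies_Atimes_contraction
    {X U : Type*} [NormedAddCommGroup X] [InnerProductSpace ℂ X] [CompleteSpace X]
    [NormedAddCommGroup U] [InnerProductSpace ℂ U] [CompleteSpace U]
    (A : X →L[ℂ] X) (B : U →L[ℂ] X) (C : X →L[ℂ] U) (D : U →L[ℂ] U)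
    (hD : IsUnit (1 + D))
    (H : X →L[ℂ] X) (hH : IsSelfAdjoint H) (hHinv : IsUnit H)
    (hKYPadj : ∃ ε : ℝ, 0 < ε ∧ ∀ (x : X) (u : U),
      (inner ℂ (Ring.inverse H (ContinuousLinearMap.adjoint A x + ContinuousLinearMap.adjoint C u))
          (ContinuousLinearMap.adjoint A x + ContinuousLinearMap.adjoint C u) : ℂ).re +
        ‖ContinuousLinearMap.adjoint B x + ContinuousLinearMap.adjoint D u‖ ^ 2 ≤
      (inner ℂ (Ring.inverse H x) x : ℂ).re + ‖u‖ ^ 2 - ε * (‖x‖ ^ 2 + ‖u‖ ^ 2))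
    (Atimes : X →L[ℂ] X) (hAtimes : Atimes = A - B ∘L Ring.inverse (1 + D) ∘L C) :
    ∃ δ : ℝ, 0 < δ ∧ ∀ x : X,
      (inner ℂ (Ring.inverse H (ContinuousLinearMap.adjoint Atimes x))
          (ContinuousLinearMap.adjoint Atimes x) : ℂ).re ≤
        (inner ℂ (Ring.inverse H x) x : ℂ).re - δ * ‖x‖ ^ 2 := by
  obtain ⟨ε, hε, h⟩ := hKYPadj
  refine ⟨ε, hε, fun x => ?_⟩
  set R : U →L[ℂ] U := Ring.inverse (1 + D) with hR
  set u : U := - (ContinuousLinearMap.adjoint R) (ContinuousLinearMap.adjoint B x) with hu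
  have hRD : R * (1 + D) = 1 := Ring.inverse_mul_cancel _ hD
  have hadj : (1 + ContinuousLinearMap.adjoint D) * ContinuousLinearMap.adjoint R = 1 := by
    have h' := congrArg ContinuousLinearMap.adjoint hRD
    rw [show R * (1 + D) = R.comp (1 + D) from rfl, adjoint_comp] at h'
    rw [show (1 + ContinuousLinearMap.adjoint D) * ContinuousLinearMap.adjoint R
      = ((1 : U →L[ℂ] U) + ContinuousLinearMap.adjoint D).comp (ContinuousLinearMap.adjoint R)
      from rfl]
    have hone : ContinuousLinearMap.adjoint (1 : U →L[ℂ] U) = 1 := adjoint_id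
    simpa [map_add, hone] using h'
  -- key identity 1 : A* x + C* u = Atimes* x
  have h1 : ContinuousLinearMap.adjoint A x + ContinuousLinearMap.adjoint C u
      = ContinuousLinearMap.adjoint Atimes x := by
    rw [hAtimes, map_sub, sub_apply, adjoint_comp, adjoint_comp]
    simp [hu, sub_eq_add_neg]
  -- key identity 2 : B* x + D* u = -u
  have h2 : ContinuousLinearMap.adjoint B x + ContinuousLinearMap.adjoint D u = -u := by
    have := congrFun (congrArg DFunLike.coe hadj) (ContinuousLinearMap.adjoint B x)
    simp only [mul_apply_eq_comp, one_apply_eq_self, add_apply] at this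
    rw [hu, map_neg, neg_neg, ← sub_eq_add_neg, sub_eq_iff_eq_add]
    exact this.symm
  have key := h x u
  rw [h1, h2, norm_neg] at key
  nlinarith [norm_nonneg u, norm_nonneg x, sq_nonneg ‖u‖]
end
end

section
/- Let H be a selfadjoint invertible operator on X = X₋ ⊕ X₊ (orthogonal Hilbert space decomposition) with block form H = [H₋ H₀; H₀* H₊], where H₋ ≺ 0 on X₋ (uniformly negative) and the Schur complement H/H₋ := H₊ − H₀* H₋⁻¹ H₀ is uniformly positive on X₊. Then, in the indefinite inner product [x,y] = ⟨Hx,y⟩, the H-orthogonal companion of the subspace X₋ ⊕ {0} equals { (−H₋⁻¹H₀ x, x) : x ∈ X₊ }, this subspace is uniformly positive, X₋ ⊕ {0} is uniformly negative, and X is the direct sum of these two subspaces. -/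
noncomputable section
open Complex ContinuousLinearMap

variable {X : Type*} [NormedAddCommGroup X] [InnerProductSpace ℂ X]

/-- The `H`-orthogonal companion `M^{[⊥]} = { y | ⟨Hx, y⟩ = 0 for all x ∈ M }`. -/
def kreinOrtho (H : X →L[ℂ] X) (M : Submodule ℂ X) : Submodule ℂ X where
  carrier := {y | ∀ x ∈ M, (inner ℂ (H x) y : ℂ) = 0}
  add_mem' := fun {a b} ha hb x hx => by simp [inner_add_right, ha x hx, hb x hx]
  zero_mem' := fun x hx => by simp
  smul_mem' := fun c y hy x hx => by simp [inner_smul_right, hy x hx]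

/-- for `H = [H₋ H₀; H₀* H₊]` selfadjoint invertible on `X₋ ⊕ X₊` with `H₋ ≺ 0`
and Schur complement `H/H₋ = H₊ − H₀*H₋⁻¹H₀ ≻ 0`, the `H`-orthogonal companion of `X₋ ⊕ {0}`
is the graph `{(−H₋⁻¹H₀x, x) : x ∈ X₊}`, which is uniformly positive, while `X₋ ⊕ {0}` is
uniformly negative, and `X` is the direct sum of the two. -/
theorem fundamental_decomposition_from_blocks
    {Xm Xp : Type*} [NormedAddCommGroup Xm] [InnerProductSpace ℂ Xm] [CompleteSpace Xm]
    [NormedAddCommGroup Xp] [InnerProductSpace ℂ Xp] [CompleteSpace Xp]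
    (H : WithLp 2 (Xm × Xp) →L[ℂ] WithLp 2 (Xm × Xp))
    (hH : IsSelfAdjoint H) (hHinv : IsUnit H)
    (Hm : Xm →L[ℂ] Xm) (H0 : Xp →L[ℂ] Xm) (Hp : Xp →L[ℂ] Xp)
    (hHm : IsSelfAdjoint Hm) (hHp : IsSelfAdjoint Hp)
    (hblock : ∀ (a : Xm) (b : Xp),
      H ((WithLp.equiv 2 (Xm × Xp)).symm (a, b)) =
        (WithLp.equiv 2 (Xm × Xp)).symm
          (Hm a + H0 b, ContinuousLinearMap.adjoint H0 a + Hp b))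
    (hHmNeg : ∃ δ : ℝ, 0 < δ ∧ ∀ a : Xm, (inner ℂ (Hm a) a : ℂ).re ≤ -δ * ‖a‖ ^ 2)
    (hHmInv : IsUnit Hm)
    (hSchur : ∃ δ : ℝ, 0 < δ ∧ ∀ b : Xp,
      (inner ℂ ((Hp - ContinuousLinearMap.adjoint H0 ∘L Ring.inverse Hm ∘L H0) b) b : ℂ).re ≥
        δ * ‖b‖ ^ 2)
    (Mneg Mpos : Submodule ℂ (WithLp 2 (Xm × Xp)))
    (hMneg : Mneg = LinearMap.ker
      ((LinearMap.snd ℂ Xm Xp).comp (WithLp.linearEquiv 2 ℂ (Xm × Xp)).toLinearMap))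
    (hMpos : Mpos = LinearMap.range
      ((WithLp.linearEquiv 2 ℂ (Xm × Xp)).symm.toLinearMap.comp
        ((-(Ring.inverse Hm ∘L H0)).toLinearMap.prod LinearMap.id))) :
    kreinOrtho H Mneg = Mpos ∧
    (∃ δ : ℝ, 0 < δ ∧ ∀ y ∈ Mpos, (inner ℂ (H y) y : ℂ).re ≥ δ * ‖y‖ ^ 2) ∧
    (∃ δ : ℝ, 0 < δ ∧ ∀ y ∈ Mneg, (inner ℂ (H y) y : ℂ).re ≤ -δ * ‖y‖ ^ 2) ∧
    IsCompl Mneg Mpos := by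
  set K : Xp →L[ℂ] Xm := Ring.inverse Hm ∘L H0 with hKdef
  -- basic composition facts
  have hHmK : ∀ b : Xp, Hm (K b) = H0 b := by
    intro b
    have : Hm ∘L Ring.inverse Hm = 1 := Ring.mul_inverse_cancel Hm hHmInv
    calc Hm (K b) = (Hm ∘L Ring.inverse Hm) (H0 b) := rfl
    _ = H0 b := by rw [this]; rfl
  have hinvHm : ∀ a : Xm, Ring.inverse Hm (Hm a) = a := by
    intro a
    have : Ring.inverse Hm ∘L Hm = 1 := Ring.inverse_mul_cancel Hm hHmInv
    calc Ring.inverse Hm (Hm a) = (Ring.inverse Hm ∘L Hm) a := rfl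
    _ = a := by rw [this]; rfl
  -- membership characterizations
  have hMnegMem : ∀ y : WithLp 2 (Xm × Xp), y ∈ Mneg ↔ y.snd = 0 := by
    intro y
    rw [hMneg, LinearMap.mem_ker]
    rfl
  have hMposMem : ∀ y : WithLp 2 (Xm × Xp), y ∈ Mpos ↔ Hm y.fst + H0 y.snd = 0 := by
    intro y
    rw [hMpos, LinearMap.mem_range]
    constructor
    · rintro ⟨b, rfl⟩
      show Hm (-(K b)) + H0 b = 0
      rw [map_neg, hHmK, neg_add_cancel]
    · intro h
      refine ⟨y.snd, ?_⟩
      have h1 : y.fst = -(K y.snd) := by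
        have e := hinvHm y.fst
        rw [eq_neg_of_add_eq_zero_left h, map_neg] at e
        exact e.symm
      show (WithLp.equiv 2 (Xm × Xp)).symm (-(K y.snd), y.snd) = y
      apply (WithLp.equiv 2 (Xm × Xp)).symm.apply_eq_iff_eq_symm_apply.2
      ext <;> simp [h1]
  -- the block formula for arbitrary y
  have hHy : ∀ y : WithLp 2 (Xm × Xp),
      H y = (WithLp.equiv 2 (Xm × Xp)).symm
        (Hm y.fst + H0 y.snd, ContinuousLinearMap.adjoint H0 y.fst + Hp y.snd) := by
    intro y
    have := hblock y.fst y.snd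
    simpa [show WithLp.toLp 2 (y.fst, y.snd) = y from rfl] using this
  -- the inner product formula
  have hinner : ∀ x y : WithLp 2 (Xm × Xp),
      (inner ℂ (H x) y : ℂ) = inner ℂ (Hm x.fst + H0 x.snd) y.fst
        + inner ℂ (ContinuousLinearMap.adjoint H0 x.fst + Hp x.snd) y.snd := by
    intro x y
    rw [hHy x, WithLp.prod_inner_apply]
    rfl
  refine ⟨?_, ?_, ?_, ?_⟩
  · -- kreinOrtho H Mneg = Mpos
    ext y
    have hmem : y ∈ kreinOrtho H Mneg ↔ ∀ x ∈ Mneg, (inner ℂ (H x) y : ℂ) = 0 := Iff.rfl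
    rw [hmem, hMposMem]
    constructor
    · intro h
      have key : ∀ a : Xm, (inner ℂ a (Hm y.fst + H0 y.snd) : ℂ) = 0 := by
        intro a
        have ha : ((WithLp.equiv 2 (Xm × Xp)).symm (a, 0)) ∈ Mneg := by
          rw [hMnegMem]; rfl
        have := h _ ha
        rw [hinner] at this
        simp only [WithLp.equiv_symm_apply, WithLp.toLp_fst, WithLp.toLp_snd, map_zero, add_zero] at this
        rw [inner_add_right]
        have e1 : (inner ℂ (Hm a) y.fst : ℂ) = inner ℂ a (Hm y.fst) := by
          conv_lhs => rw [← hHm]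
          exact ContinuousLinearMap.adjoint_inner_left _ _ _
        have e2 : (inner ℂ ((ContinuousLinearMap.adjoint H0) a) y.snd : ℂ) = inner ℂ a (H0 y.snd) :=
          ContinuousLinearMap.adjoint_inner_left _ _ _
        rw [← e1, ← e2]
        exact this
      have := key (Hm y.fst + H0 y.snd)
      exact inner_self_eq_zero.mp this
    · intro h x hx
      rw [hMnegMem] at hx
      rw [hinner, hx]
      simp only [map_zero, add_zero]
      have e1 : (inner ℂ (Hm x.fst) y.fst : ℂ) = inner ℂ x.fst (Hm y.fst) := by
        conv_lhs => rw [← hHm]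
        exact ContinuousLinearMap.adjoint_inner_left _ _ _
      have e2 : (inner ℂ ((ContinuousLinearMap.adjoint H0) x.fst) y.snd : ℂ) = inner ℂ x.fst (H0 y.snd) :=
        ContinuousLinearMap.adjoint_inner_left _ _ _
      rw [e1, e2, ← inner_add_right, h, inner_zero_right]
  · -- uniform positivity on Mpos
    obtain ⟨δ, hδ, hS⟩ := hSchur
    refine ⟨δ / (1 + ‖K‖ ^ 2), by positivity, ?_⟩
    intro y hy
    rw [hMposMem] at hy
    have h1 : y.fst = -(K y.snd) := by
      have e := hinvHm y.fst
      rw [eq_neg_of_add_eq_zero_left hy, map_neg] at e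
      exact e.symm
    have hHyval : (inner ℂ (H y) y : ℂ).re =
        (inner ℂ ((Hp - ContinuousLinearMap.adjoint H0 ∘L K) y.snd) y.snd : ℂ).re := by
      rw [hinner, hy, inner_zero_left, zero_add]
      congr 2
      rw [h1, ContinuousLinearMap.sub_apply, ContinuousLinearMap.comp_apply, map_neg]
      have : ((ContinuousLinearMap.adjoint H0).comp K) y.snd
          = (ContinuousLinearMap.adjoint H0) ((Ring.inverse Hm) (H0 y.snd)) := rfl
      rw [this]
      abel
    have hnorm : ‖y‖ ^ 2 ≤ (1 + ‖K‖ ^ 2) * ‖y.snd‖ ^ 2 := by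
      rw [WithLp.prod_norm_sq_eq_of_L2, h1, norm_neg]
      have hK2 : ‖K y.snd‖ ≤ ‖K‖ * ‖y.snd‖ := K.le_opNorm y.snd
      nlinarith [norm_nonneg (K y.snd), norm_nonneg y.snd, norm_nonneg K]
    have hpos : (1 : ℝ) + ‖K‖ ^ 2 > 0 := by positivity
    rw [hHyval]
    calc δ / (1 + ‖K‖ ^ 2) * ‖y‖ ^ 2 ≤ δ / (1 + ‖K‖ ^ 2) * ((1 + ‖K‖ ^ 2) * ‖y.snd‖ ^ 2) := by
          apply mul_le_mul_of_nonneg_left hnorm (by positivity)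
      _ = δ * ‖y.snd‖ ^ 2 := by field_simp
      _ ≤ _ := hS y.snd
  · -- uniform negativity on Mneg
    obtain ⟨δ, hδ, hN⟩ := hHmNeg
    refine ⟨δ, hδ, ?_⟩
    intro y hy
    rw [hMnegMem] at hy
    have : (inner ℂ (H y) y : ℂ).re = (inner ℂ (Hm y.fst) y.fst : ℂ).re := by
      rw [hinner, hy]
      simp
    rw [this]
    have hnorm : ‖y‖ ^ 2 = ‖y.fst‖ ^ 2 := by
      rw [WithLp.prod_norm_sq_eq_of_L2, hy]
      simp
    rw [hnorm]
    exact hN y.fst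
  · -- IsCompl
    constructor
    · rw [disjoint_iff_inf_le]
      intro y hy
      rw [Submodule.mem_inf, hMnegMem, hMposMem] at hy
      obtain ⟨h2, h1⟩ := hy
      rw [h2, map_zero, add_zero] at h1
      have h1' : y.fst = 0 := by
        have e := hinvHm y.fst
        rw [h1, map_zero] at e
        exact e.symm
      have : y = WithLp.toLp 2 ((0 : Xm), (0 : Xp)) :=
        congrArg (WithLp.toLp 2) (Prod.ext h1' h2 : WithLp.ofLp y = ((0 : Xm), (0 : Xp)))
      rw [Submodule.mem_bot, this]; rfl
    · rw [codisjoint_iff_le_sup]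
      intro y _
      have hy1 : ((WithLp.equiv 2 (Xm × Xp)).symm (y.fst + K y.snd, 0)) ∈ Mneg := by
        rw [hMnegMem]; rfl
      have hy2 : ((WithLp.equiv 2 (Xm × Xp)).symm (-(K y.snd), y.snd)) ∈ Mpos := by
        rw [hMposMem]
        show Hm (-(K y.snd)) + H0 y.snd = 0
        rw [map_neg, hHmK, neg_add_cancel]
      refine Submodule.mem_sup.2 ⟨_, hy1, _, hy2, ?_⟩
      show ((WithLp.equiv 2 (Xm × Xp)).symm (y.fst + K y.snd, 0))
          + ((WithLp.equiv 2 (Xm × Xp)).symm (-(K y.snd), y.snd)) = y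
      apply (WithLp.equiv 2 (Xm × Xp)).injective
      apply Prod.ext <;> simp
end
end

section
/- Let H be a selfadjoint invertible operator on a complex Hilbert space X, and let A ∈ B(X) satisfy A*HA ≺ H and A H⁻¹ A* ≺ H⁻¹ (A is a uniform bicontraction in the Kreĭn space with Gram operator H). Then the spectrum of A is disjoint from the unit circle 𝕋, i.e. A is dichotomous. -/
noncomputable section
open Complex ContinuousLinearMap

section Aux

variable {X : Type*} [NormedAddCommGroup X] [InnerProductSpace ℂ X] [CompleteSpace X]

/-- Key quantitative estimate: a uniform contraction w.r.t. a Gram form is bounded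
away from any unimodular `z`. -/
lemma aux_bdd_below (B T : X →L[ℂ] X) {ε : ℝ} (hε : 0 < ε)
    (h : ∀ x : X, (inner ℂ (B (T x)) (T x) : ℂ).re ≤ (inner ℂ (B x) x : ℂ).re - ε * ‖x‖ ^ 2)
    (z : ℂ) (hz : ‖z‖ = 1) (x : X) :
    (ε / (‖B‖ * (1 + ‖T‖) + 1)) * ‖x‖ ≤ ‖z • x - T x‖ := by
  set M : ℝ := ‖B‖ * (1 + ‖T‖) + 1 with hM
  have hMpos : 0 < M := by positivity
  have key : ε * ‖x‖ ^ 2 ≤ M * (‖z • x - T x‖ * ‖x‖) := by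
    have h1 : (inner ℂ (B (z • x)) (z • x) : ℂ) = inner ℂ (B x) x := by
      rw [map_smul, inner_smul_left, inner_smul_right]
      rw [← mul_assoc, mul_comm (starRingEnd ℂ z) z, Complex.mul_conj]
      simp [Complex.normSq_eq_norm_sq, hz]
    set u : X := z • x with hu
    set v : X := T x with hv
    have hsplit : (inner ℂ (B u) u : ℂ) - inner ℂ (B v) v
        = inner ℂ (B (u - v)) u + inner ℂ (B v) (u - v) := by
      rw [map_sub, inner_sub_left, inner_sub_right]; ring
    have hre : ε * ‖x‖ ^ 2 ≤ ((inner ℂ (B u) u : ℂ) - inner ℂ (B v) v).re := by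
      have := h x
      have : ε * ‖x‖ ^ 2 ≤ (inner ℂ (B x) x : ℂ).re - (inner ℂ (B v) v : ℂ).re := by
        linarith
      rw [Complex.sub_re, h1]
      exact this
    have hnu : ‖u‖ = ‖x‖ := by
      rw [hu, norm_smul]; simp [hz]
    have hb1 : ((inner ℂ (B (u - v)) u : ℂ)).re ≤ ‖B‖ * ‖u - v‖ * ‖x‖ := by
      calc ((inner ℂ (B (u - v)) u : ℂ)).re ≤ ‖inner ℂ (B (u - v)) u‖ :=
            Complex.re_le_norm _
        _ ≤ ‖B (u - v)‖ * ‖u‖ := by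
            exact norm_inner_le_norm (𝕜 := ℂ) (B (u - v)) u
        _ ≤ ‖B‖ * ‖u - v‖ * ‖x‖ := by
            rw [hnu]
            exact mul_le_mul_of_nonneg_right (B.le_opNorm _) (norm_nonneg _)
    have hb2 : ((inner ℂ (B v) (u - v) : ℂ)).re ≤ ‖B‖ * ‖T‖ * ‖x‖ * ‖u - v‖ := by
      calc ((inner ℂ (B v) (u - v) : ℂ)).re ≤ ‖inner ℂ (B v) (u - v)‖ :=
            Complex.re_le_norm _
        _ ≤ ‖B v‖ * ‖u - v‖ := by
            exact norm_inner_le_norm (𝕜 := ℂ) (B v) (u - v)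
        _ ≤ ‖B‖ * ‖T‖ * ‖x‖ * ‖u - v‖ := by
            have h1 : ‖B v‖ ≤ ‖B‖ * ‖v‖ := B.le_opNorm _
            have h2 : ‖v‖ ≤ ‖T‖ * ‖x‖ := T.le_opNorm _
            have : ‖B v‖ ≤ ‖B‖ * (‖T‖ * ‖x‖) :=
              h1.trans (mul_le_mul_of_nonneg_left h2 (norm_nonneg _))
            calc ‖B v‖ * ‖u - v‖ ≤ ‖B‖ * (‖T‖ * ‖x‖) * ‖u - v‖ :=
                  mul_le_mul_of_nonneg_right this (norm_nonneg _)
              _ = ‖B‖ * ‖T‖ * ‖x‖ * ‖u - v‖ := by ring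
    have : ε * ‖x‖ ^ 2 ≤ ‖B‖ * ‖u - v‖ * ‖x‖ + ‖B‖ * ‖T‖ * ‖x‖ * ‖u - v‖ := by
      have := hre
      rw [hsplit, Complex.add_re] at this
      linarith
    have hBTx : ‖B‖ * ‖u - v‖ * ‖x‖ + ‖B‖ * ‖T‖ * ‖x‖ * ‖u - v‖
        ≤ M * (‖u - v‖ * ‖x‖) := by
      have h0 : ‖B‖ * (1 + ‖T‖) * (‖u - v‖ * ‖x‖)
          = ‖B‖ * ‖u - v‖ * ‖x‖ + ‖B‖ * ‖T‖ * ‖x‖ * ‖u - v‖ := by ring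
      have h1 : ‖B‖ * (1 + ‖T‖) ≤ M := by rw [hM]; linarith
      calc ‖B‖ * ‖u - v‖ * ‖x‖ + ‖B‖ * ‖T‖ * ‖x‖ * ‖u - v‖
          = ‖B‖ * (1 + ‖T‖) * (‖u - v‖ * ‖x‖) := h0.symm
        _ ≤ M * (‖u - v‖ * ‖x‖) :=
            mul_le_mul_of_nonneg_right h1 (by positivity)
    exact this.trans hBTx
  rcases eq_or_ne x 0 with rfl | hx0
  · simp
  · have hxpos : (0:ℝ) < ‖x‖ := norm_pos_iff.mpr hx0
    rw [div_mul_eq_mul_div, div_le_iff₀ hMpos]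
    have : ε * ‖x‖ * ‖x‖ ≤ ‖z • x - T x‖ * M * ‖x‖ := by
      calc ε * ‖x‖ * ‖x‖ = ε * ‖x‖ ^ 2 := by ring
        _ ≤ M * (‖z • x - T x‖ * ‖x‖) := key
        _ = ‖z • x - T x‖ * M * ‖x‖ := by ring
    have := le_of_mul_le_mul_right (by linarith : ε * ‖x‖ * ‖x‖ ≤ (‖z • x - T x‖ * M) * ‖x‖) hxpos
    linarith

/-- An operator which together with its adjoint is bounded below is invertible. -/
lemma aux_isUnit (T : X →L[ℂ] X) {c c' : ℝ} (hc : 0 < c) (hc' : 0 < c')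
    (h : ∀ x : X, c * ‖x‖ ≤ ‖T x‖)
    (h' : ∀ x : X, c' * ‖x‖ ≤ ‖ContinuousLinearMap.adjoint T x‖) :
    IsUnit T := by
  rw [ContinuousLinearMap.isUnit_iff_bijective]
  have hbound : ∀ x : X, ‖x‖ ≤ (c⁻¹.toNNReal : ℝ) * ‖T x‖ := by
    intro x
    have hci : (c⁻¹.toNNReal : ℝ) = c⁻¹ := Real.coe_toNNReal _ (by positivity)
    have h2 := mul_le_mul_of_nonneg_left (h x) (le_of_lt (inv_pos.mpr hc))
    rw [← mul_assoc, inv_mul_cancel₀ hc.ne', one_mul] at h2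
    rw [hci]
    exact h2
  have hanti : AntilipschitzWith c⁻¹.toNNReal T := T.antilipschitz_of_bound hbound
  have hinj : Function.Injective T := hanti.injective
  have hclosed : IsClosed (Set.range T) := hanti.isClosed_range T.uniformContinuous
  have hrange : LinearMap.range (T : X →ₗ[ℂ] X) = ⊤ := by
    have hcl : IsClosed ((LinearMap.range (T : X →ₗ[ℂ] X) : Submodule ℂ X) : Set X) := by
      have : ((LinearMap.range (T : X →ₗ[ℂ] X) : Submodule ℂ X) : Set X) = Set.range T := by
        ext y; simp [LinearMap.mem_range]
      rw [this]; exact hclosed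
    have horth : (LinearMap.range (T : X →ₗ[ℂ] X))ᗮ = ⊥ := by
      rw [Submodule.eq_bot_iff]
      intro y hy
      have hy' : ∀ x : X, (inner ℂ (T x) y : ℂ) = 0 := fun x =>
        hy (T x) (LinearMap.mem_range_self _ x)
      have : (ContinuousLinearMap.adjoint T) y = 0 := by
        have h0 : (inner ℂ ((ContinuousLinearMap.adjoint T) y)
            ((ContinuousLinearMap.adjoint T) y) : ℂ) = 0 := by
          rw [ContinuousLinearMap.adjoint_inner_right]
          exact hy' _
        exact inner_self_eq_zero.mp h0
      have hle : c' * ‖y‖ ≤ 0 := by simpa [this] using h' y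
      have hy0 : ‖y‖ ≤ 0 := by nlinarith [norm_nonneg y]
      exact norm_eq_zero.mp (le_antisymm hy0 (norm_nonneg y))
    have := (LinearMap.range (T : X →ₗ[ℂ] X) : Submodule ℂ X).orthogonal_orthogonal_eq_closure
    rw [horth, Submodule.bot_orthogonal_eq_top] at this
    rw [← hcl.submodule_topologicalClosure_eq, ← this]
  exact ⟨hinj, LinearMap.range_eq_top.mp hrange⟩

end Aux

/-- a uniform bicontraction in the Kreĭn space with Gram operator `H`
(`A*HA ≺ H` and `AH⁻¹A* ≺ H⁻¹`) has no spectrum on the unit circle, i.e. is dichotomous. -/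
theorem uniform_bicontraction_dichotomous
    {X : Type*} [NormedAddCommGroup X] [InnerProductSpace ℂ X] [CompleteSpace X]
    (H : X →L[ℂ] X) (hH : IsSelfAdjoint H) (hHinv : IsUnit H)
    (A : X →L[ℂ] X)
    (hcontr : ∃ ε : ℝ, 0 < ε ∧ ∀ x : X,
      (inner ℂ (H (A x)) (A x) : ℂ).re ≤ (inner ℂ (H x) x : ℂ).re - ε * ‖x‖ ^ 2)
    (hcontrAdj : ∃ ε : ℝ, 0 < ε ∧ ∀ x : X,
      (inner ℂ (Ring.inverse H (ContinuousLinearMap.adjoint A x))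
          (ContinuousLinearMap.adjoint A x) : ℂ).re ≤
        (inner ℂ (Ring.inverse H x) x : ℂ).re - ε * ‖x‖ ^ 2) :
    ∀ z ∈ spectrum ℂ A, ‖z‖ ≠ 1 := by
  intro z hz habs
  obtain ⟨ε, hε, hc⟩ := hcontr
  obtain ⟨ε', hε', hc'⟩ := hcontrAdj
  rw [spectrum.mem_iff] at hz
  apply hz
  set T : X →L[ℂ] X := algebraMap ℂ (X →L[ℂ] X) z - A with hT
  have hTapp : ∀ x : X, T x = z • x - A x := by
    intro x
    simp [hT, Algebra.algebraMap_eq_smul_one]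
  have hTadj : ∀ x : X, (ContinuousLinearMap.adjoint T) x
      = (starRingEnd ℂ z) • x - (ContinuousLinearMap.adjoint A) x := by
    intro x
    have : ContinuousLinearMap.adjoint T
        = (starRingEnd ℂ z) • (1 : X →L[ℂ] X) - ContinuousLinearMap.adjoint A := by
      rw [hT, Algebra.algebraMap_eq_smul_one, map_sub, map_smulₛₗ]
      congr 1
      · congr 1
        exact ContinuousLinearMap.adjoint_id
    rw [this]; simp
  have hb1 : ∀ x : X, (ε / (‖H‖ * (1 + ‖A‖) + 1)) * ‖x‖ ≤ ‖T x‖ := by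
    intro x
    rw [hTapp]
    exact aux_bdd_below H A hε hc z habs x
  have hb2 : ∀ x : X, (ε' / (‖Ring.inverse H‖ * (1 + ‖ContinuousLinearMap.adjoint A‖) + 1)) * ‖x‖
      ≤ ‖ContinuousLinearMap.adjoint T x‖ := by
    intro x
    rw [hTadj]
    exact aux_bdd_below (Ring.inverse H) (ContinuousLinearMap.adjoint A) hε' hc'
      (starRingEnd ℂ z) (by simpa using habs) x
  exact aux_isUnit T (by positivity) (by positivity) hb1 hb2
end
end

section
/- Let H be a selfadjoint invertible operator on a complex Hilbert space X and let A ∈ B(X) be a uniform bicontraction with respect to H (A*HA ≺ H and AH⁻¹A* ≺ H⁻¹). Let (X₋, X₊) be the dichotomous pair of A (so A X₊ ⊆ X₊ with σ(A|_{X₊}) ⊂ 𝔻 and A X₋ ⊆ X₋ with σ(A|_{X₋}) ⊂ 𝔼). Then X₊ is uniformly positive and X₋ is uniformly negative with respect to the indefinite inner product [x,y] = ⟨Hx,y⟩; in particular X₊ equipped with [·,·] and X₋ equipped with −[·,·] are Hilbert spaces. -/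
set_option maxHeartbeats 1000000


noncomputable section
open Complex ContinuousLinearMap

/-- Restriction of a continuous linear map to an invariant closed submodule. -/
def clmRestrict {X : Type*} [NormedAddCommGroup X] [InnerProductSpace ℂ X]
    (A : X →L[ℂ] X) (M : Submodule ℂ X) (h : ∀ x ∈ M, A x ∈ M) : M →L[ℂ] M :=
  ContinuousLinearMap.codRestrict (A.comp M.subtypeL) M (fun x => h x x.2)

open Filter Topology ENNReal NNReal in
/-- If the spectrum of an element of a complex Banach algebra is contained in the open unit
disc, then `‖a ^ n‖ → 0`. -/
lemma tendsto_norm_pow_zero_of_spectrum_ball {𝔸 : Type*} [NormedRing 𝔸] [NormedAlgebra ℂ 𝔸]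
    [CompleteSpace 𝔸] (a : 𝔸) (h : spectrum ℂ a ⊆ Metric.ball (0 : ℂ) 1) :
    Tendsto (fun n : ℕ => ‖a ^ n‖) atTop (𝓝 0) := by
  have hρ : spectralRadius ℂ a < 1 := by
    rcases Set.eq_empty_or_nonempty (spectrum ℂ a) with he | hne
    · rw [spectralRadius]
      simp [he]
    · refine spectrum.spectralRadius_lt_of_forall_lt_of_nonempty hne (r := 1) fun k hk => ?_
      have hk' := h hk
      rw [Metric.mem_ball, dist_zero_right] at hk'
      exact_mod_cast hk'
  obtain ⟨r, hr1, hr2⟩ := ENNReal.lt_iff_exists_nnreal_btwn.mp hρ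
  have hr2' : (r : ℝ) < 1 := by exact_mod_cast hr2
  have hgel := spectrum.pow_nnnorm_pow_one_div_tendsto_nhds_spectralRadius a
  have hev : ∀ᶠ n : ℕ in atTop, (‖a ^ n‖₊ : ℝ≥0∞) ^ (1 / (n : ℝ)) < (r : ℝ≥0∞) :=
    hgel.eventually_lt_const hr1
  have hev2 : ∀ᶠ n : ℕ in atTop, ‖a ^ n‖ ≤ (r : ℝ) ^ n := by
    filter_upwards [hev, eventually_ge_atTop 1] with n hn hn1
    have hn0 : (n : ℝ) ≠ 0 := by
      have : (0:ℕ) < n := hn1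
      exact_mod_cast this.ne'
    have h1 : ((‖a ^ n‖₊ : ℝ≥0∞) ^ (1 / (n : ℝ))) ^ (n : ℝ) ≤ (r : ℝ≥0∞) ^ (n : ℝ) :=
      ENNReal.rpow_le_rpow hn.le (by positivity)
    rw [← ENNReal.rpow_mul, one_div, inv_mul_cancel₀ hn0, ENNReal.rpow_one,
      ENNReal.rpow_natCast, ← ENNReal.coe_pow, ENNReal.coe_le_coe] at h1
    exact_mod_cast h1
  exact squeeze_zero' (Filter.Eventually.of_forall fun n => norm_nonneg _) hev2
    (tendsto_pow_atTop_nhds_zero_of_lt_one r.coe_nonneg hr2')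

/-- if `A` is a uniform bicontraction with respect to the selfadjoint
invertible Gram operator `H`, and `(X₋, X₊)` is the dichotomous pair of `A`, then `X₊` is
uniformly positive and `X₋` is uniformly negative in the inner product `[x,y] = ⟨Hx,y⟩`. -/
theorem dichotomous_pair_uniformly_definite
    {X : Type*} [NormedAddCommGroup X] [InnerProductSpace ℂ X] [CompleteSpace X]
    (H : X →L[ℂ] X) (hH : IsSelfAdjoint H) (hHinv : IsUnit H)
    (A : X →L[ℂ] X)
    (hcontr : ∃ ε : ℝ, 0 < ε ∧ ∀ x : X,
      (inner ℂ (H (A x)) (A x) : ℂ).re ≤ (inner ℂ (H x) x : ℂ).re - ε * ‖x‖ ^ 2)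
    (hcontrAdj : ∃ ε : ℝ, 0 < ε ∧ ∀ x : X,
      (inner ℂ (Ring.inverse H (ContinuousLinearMap.adjoint A x))
          (ContinuousLinearMap.adjoint A x) : ℂ).re ≤
        (inner ℂ (Ring.inverse H x) x : ℂ).re - ε * ‖x‖ ^ 2)
    (Xm Xp : Submodule ℂ X)
    (hXmClosed : IsClosed (Xm : Set X)) (hXpClosed : IsClosed (Xp : Set X))
    (hcompl : IsCompl Xm Xp)
    (hAXm : ∀ x ∈ Xm, A x ∈ Xm) (hAXp : ∀ x ∈ Xp, A x ∈ Xp)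
    (hspecm : spectrum ℂ (clmRestrict A Xm hAXm) ⊆ {z : ℂ | 1 < ‖z‖})
    (hspecp : spectrum ℂ (clmRestrict A Xp hAXp) ⊆ Metric.ball (0 : ℂ) 1) :
    (∃ δ : ℝ, 0 < δ ∧ ∀ x ∈ Xp, (inner ℂ (H x) x : ℂ).re ≥ δ * ‖x‖ ^ 2) ∧
    (∃ δ : ℝ, 0 < δ ∧ ∀ x ∈ Xm, (inner ℂ (H x) x : ℂ).re ≤ -δ * ‖x‖ ^ 2) := by
  classical
  open Filter Topology in
  obtain ⟨ε, hε, hc⟩ := hcontr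
  haveI : CompleteSpace Xp := hXpClosed.completeSpace_coe
  haveI : CompleteSpace Xm := hXmClosed.completeSpace_coe
  set Tp := clmRestrict A Xp hAXp with hTpdef
  set Tm := clmRestrict A Xm hAXm with hTmdef
  -- the restriction agrees with A under coercion
  have hTpcoe : ∀ y : Xp, ((Tp y : Xp) : X) = A (y : X) := fun y => rfl
  have hTmcoe : ∀ y : Xm, ((Tm y : Xm) : X) = A (y : X) := fun y => rfl
  -- ### positive part
  have hpos : ∀ x ∈ Xp, (inner ℂ (H x) x : ℂ).re ≥ ε * ‖x‖ ^ 2 := by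
    intro x hx
    set g : ℕ → ℝ := fun n => (inner ℂ (H ((A ^ n) x)) ((A ^ n) x) : ℂ).re with hg
    have hstep : ∀ n, g (n + 1) ≤ g n - ε * ‖(A ^ n) x‖ ^ 2 := by
      intro n
      have h1 := hc ((A ^ n) x)
      simpa only [hg, pow_succ', ContinuousLinearMap.mul_apply] using h1
    have hmain : ∀ n, g (n + 1) ≤ g 0 - ε * ‖x‖ ^ 2 := by
      intro n
      induction n with
      | zero => simpa [hg] using hstep 0
      | succ n ih =>
        have h2 := hstep (n + 1)
        have h3 : g (n + 2) ≤ g (n + 1) := h2.trans (sub_le_self _ (by positivity))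
        exact h3.trans ih
    -- the powers of A tend to zero on Xp
    have hTn := tendsto_norm_pow_zero_of_spectrum_ball Tp hspecp
    have hTpow : ∀ n : ℕ, (A ^ n) x = (((Tp ^ n) ⟨x, hx⟩ : Xp) : X) := by
      intro n
      induction n with
      | zero => simp
      | succ n ih =>
        rw [pow_succ', pow_succ', ContinuousLinearMap.mul_apply,
          ContinuousLinearMap.mul_apply, ih]
        exact (hTpcoe ((Tp ^ n) ⟨x, hx⟩)).symm
    have hb : ∀ n, |g n| ≤ ‖H‖ * (‖Tp ^ n‖ * ‖x‖) ^ 2 := by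
      intro n
      set v : X := (A ^ n) x with hv
      have h1 : |g n| ≤ ‖H v‖ * ‖v‖ := by
        calc |g n| ≤ ‖(inner ℂ (H v) v : ℂ)‖ := Complex.abs_re_le_norm _
          _ = ‖(inner ℂ (H v) v : ℂ)‖ := rfl
          _ ≤ ‖H v‖ * ‖v‖ := norm_inner_le_norm _ _
      have hvle : ‖v‖ ≤ ‖Tp ^ n‖ * ‖x‖ := by
        rw [hv, hTpow n]
        calc ‖(((Tp ^ n) ⟨x, hx⟩ : Xp) : X)‖ = ‖(Tp ^ n) (⟨x, hx⟩ : Xp)‖ := rfl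
          _ ≤ ‖Tp ^ n‖ * ‖(⟨x, hx⟩ : Xp)‖ := (Tp ^ n).le_opNorm _
          _ = ‖Tp ^ n‖ * ‖x‖ := rfl
      have h2 : ‖H v‖ ≤ ‖H‖ * ‖v‖ := H.le_opNorm v
      have h3 : ‖v‖ ^ 2 ≤ (‖Tp ^ n‖ * ‖x‖) ^ 2 := pow_le_pow_left₀ (norm_nonneg v) hvle 2
      calc |g n| ≤ ‖H v‖ * ‖v‖ := h1
        _ ≤ (‖H‖ * ‖v‖) * ‖v‖ := mul_le_mul_of_nonneg_right h2 (norm_nonneg v)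
        _ = ‖H‖ * ‖v‖ ^ 2 := by ring
        _ ≤ ‖H‖ * (‖Tp ^ n‖ * ‖x‖) ^ 2 := mul_le_mul_of_nonneg_left h3 (opNorm_nonneg H)
    have htend : Filter.Tendsto g Filter.atTop (nhds 0) := by
      have h0 : Filter.Tendsto (fun n => ‖H‖ * (‖Tp ^ n‖ * ‖x‖) ^ 2) Filter.atTop
          (nhds (‖H‖ * ((0 : ℝ) * ‖x‖) ^ 2)) := ((hTn.mul_const _).pow 2).const_mul _
      simp only [zero_mul, zero_pow, mul_zero, ne_eq, OfNat.ofNat_ne_zero,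
        not_false_eq_true] at h0
      exact squeeze_zero_norm (fun n => by simpa [Real.norm_eq_abs] using hb n) h0
    have hle : (0 : ℝ) ≤ g 0 - ε * ‖x‖ ^ 2 := by
      have h1 : Filter.Tendsto (fun n => g (n + 1)) Filter.atTop (nhds 0) :=
        htend.comp (Filter.tendsto_add_atTop_nat 1)
      exact le_of_tendsto' h1 fun n => hmain n
    have hg0 : g 0 = (inner ℂ (H x) x : ℂ).re := by simp [hg]
    rw [hg0] at hle
    linarith
  refine ⟨⟨ε, hε, hpos⟩, ?_⟩
  -- ### negative part
  have h0mem : (0 : ℂ) ∉ spectrum ℂ Tm := by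
    intro hmem
    have := hspecm hmem
    simp only [Set.mem_setOf_eq, map_zero, norm_zero] at this
    linarith
  have hunit : IsUnit Tm := spectrum.isUnit_of_zero_notMem ℂ h0mem
  obtain ⟨u, hu⟩ := hunit
  set B : Xm →L[ℂ] Xm := ((u⁻¹ : (Xm →L[ℂ] Xm)ˣ) : Xm →L[ℂ] Xm) with hB
  have hBspec : spectrum ℂ B ⊆ Metric.ball (0 : ℂ) 1 := by
    intro z hz
    have hz0 : z ≠ 0 := by
      rintro rfl
      exact spectrum.zero_notMem ℂ (u⁻¹).isUnit hz
    have hz' : ((Units.mk0 z hz0)⁻¹ : ℂ) ∈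
        spectrum ℂ (((u⁻¹)⁻¹ : (Xm →L[ℂ] Xm)ˣ) : Xm →L[ℂ] Xm) :=
      (spectrum.inv_mem_iff (r := Units.mk0 z hz0) (a := u⁻¹)).mp hz
    rw [inv_inv, hu] at hz'
    have h1 := hspecm hz'
    simp only [Set.mem_setOf_eq, Units.val_inv_eq_inv_val, Units.val_mk0, map_inv₀, norm_inv] at h1
    rw [Metric.mem_ball, dist_zero_right]
    have habs : 0 < ‖z‖ := norm_pos_iff.mpr hz0
    have : ‖z‖ < 1 := (one_lt_inv_iff₀.mp h1).2
    simpa using this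
  have hBn := tendsto_norm_pow_zero_of_spectrum_ball B hBspec
  have hTmB : ∀ v : Xm, Tm (B v) = v := by
    intro v
    have h1 : Tm * B = 1 := by rw [hB, ← hu]; exact u.mul_inv
    have := DFunLike.congr_fun h1 v
    simpa [ContinuousLinearMap.mul_apply] using this
  refine ⟨ε / (max ‖A‖ 1) ^ 2, by positivity, ?_⟩
  intro x hx
  set C : ℝ := max ‖A‖ 1 with hC
  have hCpos : (0 : ℝ) < C := lt_of_lt_of_le one_pos (le_max_right _ _)
  set x' : Xm := ⟨x, hx⟩ with hx'
  set y : ℕ → Xm := fun n => (B ^ n) x' with hy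
  have hy0 : y 0 = x' := by simp [hy]
  have hysucc : ∀ n, y (n + 1) = B (y n) := by
    intro n
    simp only [hy, pow_succ', ContinuousLinearMap.mul_apply]
  have hAy : ∀ n, A ((y (n + 1) : Xm) : X) = ((y n : Xm) : X) := by
    intro n
    rw [hysucc n, ← hTmcoe (B (y n)), hTmB]
  set g : ℕ → ℝ := fun n => (inner ℂ (H ((y n : Xm) : X)) ((y n : Xm) : X) : ℂ).re with hg
  have hstep : ∀ n, g n ≤ g (n + 1) - ε * ‖((y (n + 1) : Xm) : X)‖ ^ 2 := by
    intro n
    have h1 := hc ((y (n + 1) : Xm) : X)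
    rw [hAy n] at h1
    exact h1
  have hmain : ∀ n, g 0 ≤ g (n + 1) - ε * ‖((y 1 : Xm) : X)‖ ^ 2 := by
    intro n
    induction n with
    | zero => exact hstep 0
    | succ n ih =>
      have h2 := hstep (n + 1)
      have h3 : g (n + 1) ≤ g (n + 2) := h2.trans (sub_le_self _ (by positivity))
      linarith
  -- the limit of g is 0
  have hb : ∀ n, |g n| ≤ ‖H‖ * (‖B ^ n‖ * ‖x‖) ^ 2 := by
    intro n
    set v : X := ((y n : Xm) : X) with hv
    have h1 : |g n| ≤ ‖H v‖ * ‖v‖ := by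
      calc |g n| ≤ ‖(inner ℂ (H v) v : ℂ)‖ := Complex.abs_re_le_norm _
        _ = ‖(inner ℂ (H v) v : ℂ)‖ := rfl
        _ ≤ ‖H v‖ * ‖v‖ := norm_inner_le_norm _ _
    have hvle : ‖v‖ ≤ ‖B ^ n‖ * ‖x‖ := by
      calc ‖v‖ = ‖(B ^ n) x'‖ := rfl
        _ ≤ ‖B ^ n‖ * ‖x'‖ := (B ^ n).le_opNorm _
        _ = ‖B ^ n‖ * ‖x‖ := rfl
    have h2 : ‖H v‖ ≤ ‖H‖ * ‖v‖ := H.le_opNorm v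
    have h3 : ‖v‖ ^ 2 ≤ (‖B ^ n‖ * ‖x‖) ^ 2 := pow_le_pow_left₀ (norm_nonneg v) hvle 2
    calc |g n| ≤ ‖H v‖ * ‖v‖ := h1
      _ ≤ (‖H‖ * ‖v‖) * ‖v‖ := mul_le_mul_of_nonneg_right h2 (norm_nonneg v)
      _ = ‖H‖ * ‖v‖ ^ 2 := by ring
      _ ≤ ‖H‖ * (‖B ^ n‖ * ‖x‖) ^ 2 := mul_le_mul_of_nonneg_left h3 (opNorm_nonneg H)
  have htend : Filter.Tendsto g Filter.atTop (nhds 0) := by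
    have h0 : Filter.Tendsto (fun n => ‖H‖ * (‖B ^ n‖ * ‖x‖) ^ 2) Filter.atTop
        (nhds (‖H‖ * ((0 : ℝ) * ‖x‖) ^ 2)) := ((hBn.mul_const _).pow 2).const_mul _
    simp only [zero_mul, zero_pow, mul_zero, ne_eq, OfNat.ofNat_ne_zero,
      not_false_eq_true] at h0
    exact squeeze_zero_norm (fun n => by simpa [Real.norm_eq_abs] using hb n) h0
  have hle : g 0 + ε * ‖((y 1 : Xm) : X)‖ ^ 2 ≤ 0 := by
    have h1 : Filter.Tendsto (fun n => g (n + 1)) Filter.atTop (nhds 0) :=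
      htend.comp (Filter.tendsto_add_atTop_nat 1)
    exact ge_of_tendsto' h1 fun n => by linarith [hmain n]
  -- relate ‖y 1‖ to ‖x‖
  have hxnorm : ‖x‖ ≤ C * ‖((y 1 : Xm) : X)‖ := by
    have h1 : A ((y 1 : Xm) : X) = x := by
      rw [hAy 0, hy0]
    calc ‖x‖ = ‖A ((y 1 : Xm) : X)‖ := by rw [h1]
      _ ≤ ‖A‖ * ‖((y 1 : Xm) : X)‖ := A.le_opNorm _
      _ ≤ C * ‖((y 1 : Xm) : X)‖ := by
          apply mul_le_mul_of_nonneg_right (le_max_left _ _) (norm_nonneg _)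
  have hg0 : g 0 = (inner ℂ (H x) x : ℂ).re := by simp [hg, hy0, hx']
  have hsq : ‖x‖ ^ 2 ≤ C ^ 2 * ‖((y 1 : Xm) : X)‖ ^ 2 := by
    nlinarith [norm_nonneg x, norm_nonneg ((y 1 : Xm) : X)]
  have h2 : ε / C ^ 2 * ‖x‖ ^ 2 ≤ ε * ‖((y 1 : Xm) : X)‖ ^ 2 := by
    rw [div_mul_eq_mul_div, div_le_iff₀ (by positivity)]
    nlinarith [hε.le]
  rw [← hg0]
  have : g 0 ≤ -(ε * ‖((y 1 : Xm) : X)‖ ^ 2) := by linarith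
  have hfin : g 0 ≤ -(ε / C ^ 2 * ‖x‖ ^ 2) := by linarith
  simpa [hC, neg_mul] using hfin
end
end

section
/- Let X, U be complex Hilbert spaces, A ∈ B(X), B ∈ B(U,X), C ∈ B(X,U), D ∈ B(U), and let H ∈ B(X) be selfadjoint and invertible such that both strict KYP inequalities hold: [A B; C D]* diag(H, I)[A B; C D] ≺ diag(H, I) and [A B; C D] diag(H⁻¹, I)[A B; C D]* ≺ diag(H⁻¹, I). Assume further that I + D is invertible. Then A^× := A − B(I+D)⁻¹C satisfies both (A^×)* H A^× ≺ H and A^× H⁻¹ (A^×)* ≺ H⁻¹; consequently σ(A^×) ∩ 𝕋 = ∅. -/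
noncomputable section
open Complex ContinuousLinearMap

private lemma bdd_below_aux {X : Type*} [NormedAddCommGroup X] [InnerProductSpace ℂ X]
    (G T : X →L[ℂ] X) (δ : ℝ) (hδ : 0 < δ)
    (h : ∀ x : X, (inner ℂ (G (T x)) (T x) : ℂ).re ≤ (inner ℂ (G x) x : ℂ).re - δ * ‖x‖ ^ 2)
    (z : ℂ) (hz : ‖z‖ = 1) :
    ∃ c : ℝ, 0 < c ∧ ∀ x : X, c * ‖x‖ ≤ ‖T x - z • x‖ := by
  set M : ℝ := ‖G‖ + 1 with hM
  have hM0 : 0 < M := by positivity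
  have hGn : ‖G‖ ≤ M := by simp [hM]
  refine ⟨min 1 (δ / (3 * M)), by positivity, fun x => ?_⟩
  set w : X := T x - z • x with hw
  have hTx : T x = z • x + w := by rw [hw]; abel
  have hzn : ‖z‖ = 1 := hz
  have hzx : ‖z • x‖ = ‖x‖ := by rw [norm_smul, hzn, one_mul]
  have hGb : ∀ v : X, ‖G v‖ ≤ M * ‖v‖ := fun v =>
    le_trans (G.le_opNorm v) (mul_le_mul_of_nonneg_right hGn (norm_nonneg v))
  have hzz : (starRingEnd ℂ) z * z = 1 := by
    rw [mul_comm, Complex.mul_conj]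
    norm_cast
    rw [← Complex.sq_norm, hz]; norm_num
  have key : (inner ℂ (G (T x)) (T x) : ℂ) =
      inner ℂ (G x) x + (inner ℂ (G (z • x)) w + inner ℂ (G w) (z • x) + inner ℂ (G w) w) := by
    rw [hTx, map_add, inner_add_left, inner_add_right, inner_add_right, map_smul,
        inner_smul_left, inner_smul_right, ← mul_assoc, hzz, one_mul]
    ring
  have hre : (inner ℂ (G (T x)) (T x) : ℂ).re = (inner ℂ (G x) x : ℂ).re +
      ((inner ℂ (G (z • x)) w : ℂ).re + (inner ℂ (G w) (z • x) : ℂ).re + (inner ℂ (G w) w : ℂ).re) := by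
    rw [key]; simp
  have hb : ∀ (a b : X), |(inner ℂ (G a) b : ℂ).re| ≤ (M * ‖a‖) * ‖b‖ := by
    intro a b
    calc |(inner ℂ (G a) b : ℂ).re| ≤ ‖(inner ℂ (G a) b : ℂ)‖ := Complex.abs_re_le_norm _
      _ ≤ ‖G a‖ * ‖b‖ := norm_inner_le_norm _ _
      _ ≤ (M * ‖a‖) * ‖b‖ := mul_le_mul_of_nonneg_right (hGb a) (norm_nonneg b)
  have h1 := hb (z • x) w
  have h2 := hb w (z • x)
  have h3 := hb w w
  rw [hzx] at h1 h2
  have hx := h x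
  rw [hre] at hx
  have hkey : δ * ‖x‖ ^ 2 ≤ 2 * M * ‖x‖ * ‖w‖ + M * ‖w‖ ^ 2 := by
    have := abs_le.mp h1
    have := abs_le.mp h2
    have := abs_le.mp h3
    nlinarith [norm_nonneg w, norm_nonneg x]
  rcases le_or_gt ‖x‖ ‖w‖ with hle | hlt
  · calc min 1 (δ / (3 * M)) * ‖x‖ ≤ 1 * ‖x‖ :=
        mul_le_mul_of_nonneg_right (min_le_left _ _) (norm_nonneg x)
      _ ≤ ‖w‖ := by rw [one_mul]; exact hle
  · have hx0 : 0 < ‖x‖ := lt_of_le_of_lt (norm_nonneg w) hlt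
    have hc2 : min 1 (δ / (3 * M)) * (3 * M) ≤ δ := by
      have := min_le_right 1 (δ / (3 * M))
      have h3M : (0:ℝ) < 3 * M := by positivity
      calc min 1 (δ / (3 * M)) * (3 * M) ≤ (δ / (3 * M)) * (3 * M) :=
          mul_le_mul_of_nonneg_right this (le_of_lt h3M)
        _ = δ := by field_simp
    have hdx : δ * ‖x‖ ≤ 3 * M * ‖w‖ := by
      nlinarith [hkey, mul_pos hM0 hx0,
        mul_nonneg (mul_nonneg hM0.le (norm_nonneg w)) (sub_nonneg.mpr hlt.le)]
    nlinarith [norm_nonneg w]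

private lemma isUnit_of_bdd_below {X : Type*} [NormedAddCommGroup X] [InnerProductSpace ℂ X]
    [CompleteSpace X] (T : X →L[ℂ] X) (c c' : ℝ) (hc : 0 < c) (hc' : 0 < c')
    (h : ∀ x, c * ‖x‖ ≤ ‖T x‖)
    (h' : ∀ x, c' * ‖x‖ ≤ ‖ContinuousLinearMap.adjoint T x‖) :
    IsUnit T := by
  have hinj : LinearMap.ker (T : X →ₗ[ℂ] X) = ⊥ := by
    rw [LinearMap.ker_eq_bot']
    intro x hx
    have hx' := h x
    rw [show T x = 0 from hx, norm_zero] at hx'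
    have : ‖x‖ ≤ 0 := by nlinarith [norm_nonneg x]
    exact norm_le_zero_iff.mp this
  have hanti : AntilipschitzWith (Real.toNNReal c⁻¹) T := by
    apply T.antilipschitz_of_bound
    intro x
    rw [Real.coe_toNNReal _ (by positivity)]
    have h2 : ‖x‖ = c⁻¹ * (c * ‖x‖) := by field_simp
    rw [h2]
    exact mul_le_mul_of_nonneg_left (h x) (by positivity)
  have hclosed : IsClosed (Set.range T) := hanti.isClosed_range T.uniformContinuous
  have hclosed' : IsClosed ((LinearMap.range (T : X →ₗ[ℂ] X) : Submodule ℂ X) : Set X) := by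
    rwa [LinearMap.coe_range]
  haveI : CompleteSpace (LinearMap.range (T : X →ₗ[ℂ] X)) := hclosed'.completeSpace_coe
  have hrange : LinearMap.range (T : X →ₗ[ℂ] X) = ⊤ := by
    rw [← Submodule.orthogonal_eq_bot_iff, Submodule.eq_bot_iff]
    intro y hy
    have hy0 : ContinuousLinearMap.adjoint T y = 0 := by
      have hinner : (inner ℂ (ContinuousLinearMap.adjoint T y)
          (ContinuousLinearMap.adjoint T y) : ℂ) = 0 := by
        rw [ContinuousLinearMap.adjoint_inner_right]
        exact (Submodule.mem_orthogonal _ _).mp hy _ ⟨_, rfl⟩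
      exact inner_self_eq_zero.mp hinner
    have hy' := h' y
    rw [hy0, norm_zero] at hy'
    have : ‖y‖ ≤ 0 := by nlinarith [norm_nonneg y]
    exact norm_le_zero_iff.mp this
  let e := ContinuousLinearEquiv.ofBijective T hinj hrange
  refine ⟨⟨T, (e.symm : X →L[ℂ] X), ?_, ?_⟩, rfl⟩
  · ext x
    have := e.apply_symm_apply x
    simpa [e, ContinuousLinearMap.mul_apply] using this
  · ext x
    have := e.symm_apply_apply x
    simpa [e, ContinuousLinearMap.mul_apply] using this

set_option maxHeartbeats 1000000

/-- if both strict KYP inequalities hold for `[A B; C D]` with the selfadjoint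
invertible Gram operator `H`, and `I + D` is invertible, then `A^× = A − B(I+D)⁻¹C` satisfies
`(A^×)*HA^× ≺ H` and `A^×H⁻¹(A^×)* ≺ H⁻¹`; consequently `σ(A^×) ∩ 𝕋 = ∅`. -/
theorem Atimes_bicontraction_and_dichotomous
    {X U : Type*} [NormedAddCommGroup X] [InnerProductSpace ℂ X] [CompleteSpace X]
    [NormedAddCommGroup U] [InnerProductSpace ℂ U] [CompleteSpace U]
    (A : X →L[ℂ] X) (B : U →L[ℂ] X) (C : X →L[ℂ] U) (D : U →L[ℂ] U)
    (H : X →L[ℂ] X) (hH : IsSelfAdjoint H) (hHinv : IsUnit H)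
    (hKYP : ∃ ε : ℝ, 0 < ε ∧ ∀ (x : X) (u : U),
      (inner ℂ (H (A x + B u)) (A x + B u) : ℂ).re + ‖C x + D u‖ ^ 2 ≤
        (inner ℂ (H x) x : ℂ).re + ‖u‖ ^ 2 - ε * (‖x‖ ^ 2 + ‖u‖ ^ 2))
    (hKYPadj : ∃ ε : ℝ, 0 < ε ∧ ∀ (x : X) (u : U),
      (inner ℂ (Ring.inverse H (ContinuousLinearMap.adjoint A x + ContinuousLinearMap.adjoint C u))
          (ContinuousLinearMap.adjoint A x + ContinuousLinearMap.adjoint C u) : ℂ).re +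
        ‖ContinuousLinearMap.adjoint B x + ContinuousLinearMap.adjoint D u‖ ^ 2 ≤
      (inner ℂ (Ring.inverse H x) x : ℂ).re + ‖u‖ ^ 2 - ε * (‖x‖ ^ 2 + ‖u‖ ^ 2))
    (hD : IsUnit (1 + D))
    (Atimes : X →L[ℂ] X) (hAtimes : Atimes = A - B ∘L Ring.inverse (1 + D) ∘L C) :
    (∃ δ : ℝ, 0 < δ ∧ ∀ x : X,
      (inner ℂ (H (Atimes x)) (Atimes x) : ℂ).re ≤ (inner ℂ (H x) x : ℂ).re - δ * ‖x‖ ^ 2) ∧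
    (∃ δ : ℝ, 0 < δ ∧ ∀ x : X,
      (inner ℂ (Ring.inverse H (ContinuousLinearMap.adjoint Atimes x))
          (ContinuousLinearMap.adjoint Atimes x) : ℂ).re ≤
        (inner ℂ (Ring.inverse H x) x : ℂ).re - δ * ‖x‖ ^ 2) ∧
    (∀ z ∈ spectrum ℂ Atimes, ‖z‖ ≠ 1) := by
  obtain ⟨ε, hε, hK⟩ := hKYP
  obtain ⟨ε', hε', hK'⟩ := hKYPadj
  -- inverse of 1 + D acts as a right inverse pointwise
  have hmulD : ∀ u : U, (1 + D) (Ring.inverse (1 + D) u) = u := by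
    intro u
    have h1 : (1 + D) * Ring.inverse (1 + D) = 1 := Ring.mul_inverse_cancel _ hD
    have := ContinuousLinearMap.ext_iff.mp h1 u
    simpa [ContinuousLinearMap.mul_apply] using this
  -- Part 1
  have part1 : ∀ x : X,
      (inner ℂ (H (Atimes x)) (Atimes x) : ℂ).re ≤ (inner ℂ (H x) x : ℂ).re - ε * ‖x‖ ^ 2 := by
    intro x
    set w : U := Ring.inverse (1 + D) (C x) with hwdef
    have hA1 : A x + B (-w) = Atimes x := by
      rw [hAtimes]
      simp [ContinuousLinearMap.comp_apply, sub_eq_add_neg, ← hwdef]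
    have hC1 : C x + D (-w) = w := by
      have h2 : w + D w = C x := by
        have h1 := hmulD (C x)
        simpa [ContinuousLinearMap.add_apply, ContinuousLinearMap.one_apply] using h1
      rw [map_neg, ← h2]; abel
    have hk := hK x (-w)
    rw [hA1, hC1, norm_neg] at hk
    nlinarith [mul_nonneg hε.le (sq_nonneg ‖w‖)]
  -- adjoint helpers
  have hDstar : IsUnit (1 + ContinuousLinearMap.adjoint D) := by
    have := hD.star
    rwa [star_add, star_one, star_eq_adjoint] at this
  have hmulD' : ∀ u : U, (1 + ContinuousLinearMap.adjoint D)
      (Ring.inverse (1 + ContinuousLinearMap.adjoint D) u) = u := by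
    intro u
    have h1 : (1 + ContinuousLinearMap.adjoint D) *
        Ring.inverse (1 + ContinuousLinearMap.adjoint D) = 1 :=
      Ring.mul_inverse_cancel _ hDstar
    have := ContinuousLinearMap.ext_iff.mp h1 u
    simpa [ContinuousLinearMap.mul_apply] using this
  have hAdj : ContinuousLinearMap.adjoint Atimes = ContinuousLinearMap.adjoint A -
      ContinuousLinearMap.adjoint C ∘L Ring.inverse (1 + ContinuousLinearMap.adjoint D) ∘L
        ContinuousLinearMap.adjoint B := by
    rw [hAtimes, map_sub]
    congr 1
    rw [adjoint_comp, adjoint_comp]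
    have hR : ContinuousLinearMap.adjoint (Ring.inverse (1 + D)) =
        Ring.inverse (1 + ContinuousLinearMap.adjoint D) := by
      rw [← star_eq_adjoint, ← Ring.inverse_star, star_add, star_one, star_eq_adjoint]
    rw [hR, ContinuousLinearMap.comp_assoc]
  -- Part 2
  have part2 : ∀ x : X,
      (inner ℂ (Ring.inverse H (ContinuousLinearMap.adjoint Atimes x))
        (ContinuousLinearMap.adjoint Atimes x) : ℂ).re ≤
        (inner ℂ (Ring.inverse H x) x : ℂ).re - ε' * ‖x‖ ^ 2 := by
    intro x
    set w : U := Ring.inverse (1 + ContinuousLinearMap.adjoint D)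
      (ContinuousLinearMap.adjoint B x) with hwdef
    have hA2 : ContinuousLinearMap.adjoint A x + ContinuousLinearMap.adjoint C (-w) =
        ContinuousLinearMap.adjoint Atimes x := by
      rw [hAdj]
      simp [ContinuousLinearMap.comp_apply, sub_eq_add_neg, ← hwdef]
    have hC2 : ContinuousLinearMap.adjoint B x + ContinuousLinearMap.adjoint D (-w) = w := by
      have h2 : w + ContinuousLinearMap.adjoint D w = ContinuousLinearMap.adjoint B x := by
        have h1 := hmulD' (ContinuousLinearMap.adjoint B x)
        simpa [ContinuousLinearMap.add_apply, ContinuousLinearMap.one_apply] using h1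
      rw [map_neg, ← h2]; abel
    have hk := hK' x (-w)
    rw [hA2, hC2, norm_neg] at hk
    nlinarith [mul_nonneg hε'.le (sq_nonneg ‖w‖)]
  refine ⟨⟨ε, hε, part1⟩, ⟨ε', hε', part2⟩, ?_⟩
  -- spectrum
  intro z hzspec hz1
  obtain ⟨c, hc, hbb⟩ := bdd_below_aux H Atimes ε hε part1 z hz1
  obtain ⟨c', hc', hbb'⟩ := bdd_below_aux (Ring.inverse H)
    (ContinuousLinearMap.adjoint Atimes) ε' hε' part2 ((starRingEnd ℂ) z)
    (by rwa [Complex.norm_conj])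
  set T : X →L[ℂ] X := Atimes - z • 1 with hT
  have hadjT : ContinuousLinearMap.adjoint T =
      ContinuousLinearMap.adjoint Atimes - (starRingEnd ℂ) z • 1 := by
    rw [hT, ← star_eq_adjoint, star_sub, star_smul, star_one, star_eq_adjoint]
    rfl
  have hunit : IsUnit T := by
    apply isUnit_of_bdd_below T c c' hc hc'
    · intro x
      simpa [hT, ContinuousLinearMap.sub_apply, ContinuousLinearMap.smul_apply,
        ContinuousLinearMap.one_apply] using hbb x
    · intro x
      rw [hadjT]
      simpa [ContinuousLinearMap.sub_apply, ContinuousLinearMap.smul_apply,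
        ContinuousLinearMap.one_apply] using hbb' x
  have hns := spectrum.mem_iff.mp hzspec
  apply hns
  rw [Algebra.algebraMap_eq_smul_one]
  have hTeq : z • (1 : X →L[ℂ] X) - Atimes = -T := by rw [hT]; abel
  rw [hTeq]
  exact hunit.neg
end
end

section
/- Let A be a dichotomous operator on a complex Hilbert space X with dichotomous pair (X₋, X₊), and suppose H ∈ B(X) is selfadjoint and invertible with A*HA ≺ H. Decompose H = [H₋ H₀; H₀* H₊] with respect to an orthogonal decomposition X = X₋ ⊕ X₊ (assume additionally that the dichotomous decomposition is orthogonal). Then H₋ ≺ 0 on X₋ and H₊ ≻ 0 on X₊; in particular, ⟨Hx, x⟩ ≤ −δ‖x‖² for all x ∈ X₋ and ⟨Hx, x⟩ ≥ δ‖x‖² for all x ∈ X₊, for some δ > 0. -/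
noncomputable section
open Complex ContinuousLinearMap

open Filter Topology ENNReal in
lemma pow_norm_tendsto_zero_of_spectralRadius_lt_one {𝔸 : Type*} [NormedRing 𝔸]
    [NormedAlgebra ℂ 𝔸] [CompleteSpace 𝔸] (a : 𝔸) (h : spectralRadius ℂ a < 1) :
    Filter.Tendsto (fun n : ℕ => ‖a ^ n‖) Filter.atTop (𝓝 0) := by
  obtain ⟨r, hr1, hr2⟩ := exists_between h
  lift r to NNReal using (hr2.trans_le le_top).ne
  have hr2' : (r : ℝ) < 1 := by exact_mod_cast hr2
  have hr0 : (0 : ℝ) ≤ r := r.coe_nonneg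
  have hgel := spectrum.pow_nnnorm_pow_one_div_tendsto_nhds_spectralRadius a
  have hev : ∀ᶠ n : ℕ in atTop, (‖a ^ n‖₊ : ℝ≥0∞) ^ (1 / (n : ℝ)) < (r : ℝ≥0∞) :=
    hgel.eventually_lt_const hr1
  have hev2 : ∀ᶠ n : ℕ in atTop, ‖a ^ n‖ ≤ (r : ℝ) ^ n := by
    filter_upwards [hev, eventually_ge_atTop 1] with n hn hn1
    have hn0 : (n : ℝ) ≠ 0 := by positivity
    have : ((‖a ^ n‖₊ : ℝ≥0∞) ^ (1 / (n : ℝ))) ^ (n : ℝ) ≤ ((r : ℝ≥0∞)) ^ (n : ℝ) :=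
      ENNReal.rpow_le_rpow hn.le (by positivity)
    rw [← ENNReal.rpow_mul, one_div_mul_cancel hn0, ENNReal.rpow_one,
      ENNReal.rpow_natCast] at this
    have := ENNReal.toReal_mono (by simp) this
    simpa [ENNReal.toReal_pow] using this
  refine squeeze_zero' (Filter.Eventually.of_forall fun n => norm_nonneg _) hev2 ?_
  exact tendsto_pow_atTop_nhds_zero_of_lt_one hr0 hr2'

open Filter Topology in
set_option maxHeartbeats 4000000 in
/-- if `A` is dichotomous with orthogonal dichotomous decomposition
`X = X₋ ⊕ X₊`, and `H` is selfadjoint invertible with `A*HA ≺ H`, then `H` is uniformly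
negative on `X₋` and uniformly positive on `X₊`: there is `δ > 0` with `⟨Hx,x⟩ ≤ −δ‖x‖²`
on `X₋` and `⟨Hx,x⟩ ≥ δ‖x‖²` on `X₊`. -/
theorem H_definite_on_dichotomous_pair
    {X : Type*} [NormedAddCommGroup X] [InnerProductSpace ℂ X] [CompleteSpace X]
    (A : X →L[ℂ] X)
    (Xm Xp : Submodule ℂ X)
    (hXmClosed : IsClosed (Xm : Set X)) (hXpClosed : IsClosed (Xp : Set X))
    (hcompl : IsCompl Xm Xp)
    (horth : ∀ x ∈ Xm, ∀ y ∈ Xp, (inner ℂ x y : ℂ) = 0)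
    (hAXm : ∀ x ∈ Xm, A x ∈ Xm) (hAXp : ∀ x ∈ Xp, A x ∈ Xp)
    (hspecm : spectrum ℂ (clmRestrict A Xm hAXm) ⊆ {z : ℂ | 1 < ‖z‖})
    (hspecp : spectrum ℂ (clmRestrict A Xp hAXp) ⊆ Metric.ball (0 : ℂ) 1)
    (H : X →L[ℂ] X) (hH : IsSelfAdjoint H) (hHinv : IsUnit H)
    (hcontr : ∃ ε : ℝ, 0 < ε ∧ ∀ x : X,
      (inner ℂ (H (A x)) (A x) : ℂ).re ≤ (inner ℂ (H x) x : ℂ).re - ε * ‖x‖ ^ 2) :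
    ∃ δ : ℝ, 0 < δ ∧
      (∀ x ∈ Xm, (inner ℂ (H x) x : ℂ).re ≤ -δ * ‖x‖ ^ 2) ∧
      (∀ x ∈ Xp, (inner ℂ (H x) x : ℂ).re ≥ δ * ‖x‖ ^ 2) := by
  obtain ⟨ε, hε, hc⟩ := hcontr
  haveI : CompleteSpace Xm := hXmClosed.completeSpace_coe
  haveI : CompleteSpace Xp := hXpClosed.completeSpace_coe
  set Am := clmRestrict A Xm hAXm with hAmdef
  set Ap := clmRestrict A Xp hAXp with hApdef
  have hQcont : Continuous fun z : X => (inner ℂ (H z) z : ℂ).re :=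
    Complex.continuous_re.comp ((H.continuous).inner continuous_id)
  have hcoeAm : ∀ v : Xm, (Am v : X) = A v := fun v => rfl
  have hcoeAp : ∀ v : Xp, (Ap v : X) = A v := fun v => rfl
  set C : ℝ := max ‖Am‖ 1 with hCdef
  have hC1 : (1 : ℝ) ≤ C := le_max_right _ _
  have hC0 : (0 : ℝ) < C := lt_of_lt_of_le one_pos hC1
  refine ⟨min ε (ε / C ^ 2), lt_min hε (by positivity), ?_, ?_⟩
  · -- negative on Xm
    intro x hx
    rcases eq_or_ne x 0 with rfl | hx0
    · simp
    haveI : Nontrivial Xm := nontrivial_of_ne ⟨x, hx⟩ 0 (by simp [Subtype.ext_iff, hx0])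
    have hUnit : IsUnit Am := by
      rw [← spectrum.zero_notMem_iff ℂ]
      intro h0
      have h1 := hspecm h0
      simp only [Set.mem_setOf_eq, norm_zero] at h1
      linarith
    set u := hUnit.unit with hudef
    set B : Xm →L[ℂ] Xm := ((u⁻¹ : (Xm →L[ℂ] Xm)ˣ) : Xm →L[ℂ] Xm) with hBdef
    have hspecB : spectralRadius ℂ B < 1 := by
      have hforall : ∀ z ∈ spectrum ℂ B, ‖z‖₊ < 1 := by
        intro z hz
        have hz0 : z ≠ 0 := by
          rintro rfl
          exact spectrum.zero_notMem ℂ (u⁻¹).isUnit hz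
        have hzinv := spectrum.inv_mem_iff.mp
          (show ((Units.mk0 z hz0 : ℂˣ) : ℂ) ∈ spectrum ℂ ((u⁻¹ : (Xm →L[ℂ] Xm)ˣ) : Xm →L[ℂ] Xm)
            from hz)
        have hzAm : (z⁻¹ : ℂ) ∈ spectrum ℂ Am := by
          simpa only [inv_inv, Units.val_inv_eq_inv_val, Units.val_mk0,
            hudef, IsUnit.unit_spec] using hzinv
        have h1 : 1 < ‖z⁻¹‖ := hspecm hzAm
        rw [norm_inv] at h1
        have habs : ‖z‖ < 1 := by
          have h0 : 0 < ‖z‖ := norm_pos_iff.mpr hz0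
          rw [lt_inv_comm₀ one_pos h0] at h1
          simpa using h1
        have : ‖z‖ < 1 := by simpa using habs
        exact_mod_cast this
      have := spectrum.spectralRadius_lt_of_forall_lt (a := B) (r := 1) hforall
      simpa using this
    have hdecay := pow_norm_tendsto_zero_of_spectralRadius_lt_one B hspecB
    set w : Xm := ⟨x, hx⟩ with hwdef
    have hwn : Tendsto (fun n : ℕ => (((B ^ n) w : Xm) : X)) atTop (𝓝 0) := by
      rw [tendsto_zero_iff_norm_tendsto_zero]
      refine squeeze_zero (fun n => norm_nonneg _) (fun n => ?_)
        (by simpa using hdecay.mul_const ‖w‖)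
      calc ‖(((B ^ n) w : Xm) : X)‖ = ‖(B ^ n) w‖ := rfl
        _ ≤ ‖B ^ n‖ * ‖w‖ := (B ^ n).le_opNorm w
    have hABv : ∀ v : Xm, Am (B v) = v := by
      intro v
      have h1 : Am * B = 1 := by
        rw [hBdef, ← hUnit.unit_spec]
        exact_mod_cast u.mul_inv
      calc Am (B v) = (Am * B) v := rfl
        _ = v := by rw [h1]; rfl
    have hstep : ∀ n : ℕ, A (((B ^ (n + 1)) w : Xm) : X) = (((B ^ n) w : Xm) : X) := by
      intro n
      have h1 : (B ^ (n + 1)) w = B ((B ^ n) w) := by rw [pow_succ']; rfl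
      rw [h1, ← hcoeAm, hABv]
    have hkey : ∀ n : ℕ, (inner ℂ (H x) x : ℂ).re ≤
        (inner ℂ (H (((B ^ (n + 1)) w : Xm) : X)) (((B ^ (n + 1)) w : Xm) : X) : ℂ).re
          - ε * ‖(((B ^ 1) w : Xm) : X)‖ ^ 2 := by
      intro n
      induction n with
      | zero =>
        have h1 := hc (((B ^ 1) w : Xm) : X)
        rw [hstep 0] at h1
        simpa [hwdef] using h1
      | succ n ih =>
        have h2 := hc (((B ^ (n + 2)) w : Xm) : X)
        rw [hstep (n + 1)] at h2
        have h3 : (0 : ℝ) ≤ ε * ‖(((B ^ (n + 2)) w : Xm) : X)‖ ^ 2 := by positivity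
        calc (inner ℂ (H x) x : ℂ).re
            ≤ (inner ℂ (H (((B ^ (n + 1)) w : Xm) : X)) (((B ^ (n + 1)) w : Xm) : X) : ℂ).re
              - ε * ‖(((B ^ 1) w : Xm) : X)‖ ^ 2 := ih
          _ ≤ (inner ℂ (H (((B ^ (n + 2)) w : Xm) : X)) (((B ^ (n + 2)) w : Xm) : X) : ℂ).re
              - ε * ‖(((B ^ 1) w : Xm) : X)‖ ^ 2 := by linarith
    have hlim : Tendsto (fun n : ℕ =>
        (inner ℂ (H (((B ^ (n + 1)) w : Xm) : X)) (((B ^ (n + 1)) w : Xm) : X) : ℂ).re)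
        atTop (𝓝 0) := by
      have h1 : Tendsto (fun n : ℕ => (((B ^ (n + 1)) w : Xm) : X)) atTop (𝓝 0) :=
        hwn.comp (tendsto_add_atTop_nat 1)
      have h2 := (hQcont.tendsto 0).comp h1
      simpa [Function.comp_def] using h2
    have hfin : (inner ℂ (H x) x : ℂ).re + ε * ‖(((B ^ 1) w : Xm) : X)‖ ^ 2 ≤ 0 :=
      ge_of_tendsto' hlim (fun n => by linarith [hkey n])
    have hnorm : ‖x‖ ≤ C * ‖(((B ^ 1) w : Xm) : X)‖ := by
      have h1 : x = ((Am ((B ^ 1) w) : Xm) : X) := by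
        rw [pow_one, hABv]
      calc ‖x‖ = ‖Am ((B ^ 1) w)‖ := by rw [h1]; rfl
        _ ≤ ‖Am‖ * ‖(B ^ 1) w‖ := Am.le_opNorm _
        _ ≤ C * ‖(B ^ 1) w‖ := by
            apply mul_le_mul_of_nonneg_right (le_max_left _ _) (norm_nonneg _)
        _ = C * ‖(((B ^ 1) w : Xm) : X)‖ := rfl
    have hδ : min ε (ε / C ^ 2) * C ^ 2 ≤ ε := by
      have := min_le_right ε (ε / C ^ 2)
      calc min ε (ε / C ^ 2) * C ^ 2 ≤ (ε / C ^ 2) * C ^ 2 := by nlinarith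
        _ = ε := by field_simp
    set b : ℝ := ‖(((B ^ 1) w : Xm) : X)‖ with hbdef
    have hb0 : 0 ≤ b := norm_nonneg _
    have hx2 : ‖x‖ ^ 2 ≤ C ^ 2 * b ^ 2 := by nlinarith [norm_nonneg x]
    have hm0 : 0 ≤ min ε (ε / C ^ 2) := le_min hε.le (by positivity)
    have h5 : min ε (ε / C ^ 2) * ‖x‖ ^ 2 ≤ ε * b ^ 2 := by
      calc min ε (ε / C ^ 2) * ‖x‖ ^ 2 ≤ min ε (ε / C ^ 2) * (C ^ 2 * b ^ 2) :=
            mul_le_mul_of_nonneg_left hx2 hm0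
        _ = min ε (ε / C ^ 2) * C ^ 2 * b ^ 2 := by ring
        _ ≤ ε * b ^ 2 := mul_le_mul_of_nonneg_right hδ (by positivity)
    linarith
  · -- positive on Xp
    intro x hx
    rcases eq_or_ne x 0 with rfl | hx0
    · simp
    haveI : Nontrivial Xp := nontrivial_of_ne ⟨x, hx⟩ 0 (by simp [Subtype.ext_iff, hx0])
    have hspecAp : spectralRadius ℂ Ap < 1 := by
      have hforall : ∀ z ∈ spectrum ℂ Ap, ‖z‖₊ < 1 := by
        intro z hz
        have h1 := hspecp hz
        rw [Metric.mem_ball, dist_zero_right] at h1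
        exact_mod_cast h1
      have := spectrum.spectralRadius_lt_of_forall_lt (a := Ap) (r := 1) hforall
      simpa using this
    have hdecay := pow_norm_tendsto_zero_of_spectralRadius_lt_one Ap hspecAp
    set w : Xp := ⟨x, hx⟩ with hwdef
    have hwn : Tendsto (fun n : ℕ => (((Ap ^ n) w : Xp) : X)) atTop (𝓝 0) := by
      rw [tendsto_zero_iff_norm_tendsto_zero]
      refine squeeze_zero (fun n => norm_nonneg _) (fun n => ?_)
        (by simpa using hdecay.mul_const ‖w‖)
      calc ‖(((Ap ^ n) w : Xp) : X)‖ = ‖(Ap ^ n) w‖ := rfl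
        _ ≤ ‖Ap ^ n‖ * ‖w‖ := (Ap ^ n).le_opNorm w
    have hstep : ∀ n : ℕ, A (((Ap ^ n) w : Xp) : X) = (((Ap ^ (n + 1)) w : Xp) : X) := by
      intro n
      have h1 : (Ap ^ (n + 1)) w = Ap ((Ap ^ n) w) := by rw [pow_succ']; rfl
      rw [h1, ← hcoeAp]
    have hkey : ∀ n : ℕ,
        (inner ℂ (H (((Ap ^ (n + 1)) w : Xp) : X)) (((Ap ^ (n + 1)) w : Xp) : X) : ℂ).re ≤
          (inner ℂ (H x) x : ℂ).re - ε * ‖x‖ ^ 2 := by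
      intro n
      induction n with
      | zero =>
        have h1 := hc x
        have h0 : (((Ap ^ 1) w : Xp) : X) = A x := by rw [← hstep 0]; simp [hwdef]
        rw [h0]
        exact h1
      | succ n ih =>
        have h2 := hc (((Ap ^ (n + 1)) w : Xp) : X)
        rw [hstep (n + 1)] at h2
        have h3 : (0 : ℝ) ≤ ε * ‖(((Ap ^ (n + 1)) w : Xp) : X)‖ ^ 2 := by positivity
        linarith
    have hlim : Tendsto (fun n : ℕ =>
        (inner ℂ (H (((Ap ^ (n + 1)) w : Xp) : X)) (((Ap ^ (n + 1)) w : Xp) : X) : ℂ).re)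
        atTop (𝓝 0) := by
      have h1 : Tendsto (fun n : ℕ => (((Ap ^ (n + 1)) w : Xp) : X)) atTop (𝓝 0) :=
        hwn.comp (tendsto_add_atTop_nat 1)
      have h2 := (hQcont.tendsto 0).comp h1
      simpa [Function.comp_def] using h2
    have hfin : (0 : ℝ) ≤ (inner ℂ (H x) x : ℂ).re - ε * ‖x‖ ^ 2 :=
      le_of_tendsto' hlim hkey
    have hδ : min ε (ε / C ^ 2) ≤ ε := min_le_left _ _
    nlinarith [sq_nonneg ‖x‖]
end
end
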